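/- Suppose |M| = |W|, every woman's preference list is full (ranks all of M), and the profile q̄ ∈ P(M)^W is acyclical. Then the M-optimal stable matching rule C^q̄ is OSP-implementable. -/

import Mathlib

/-- A preference list over `α` (a totally ordered subset of `α`), represented as a
duplicate-free list, most-preferred member first. Members of `α` not on the list
are unranked (unacceptable). -/
abbrev PrefList (α : Type) : Type := {l : List α // l.Nodup}

/-- `x ≻ y` according to `p`: `x` is ranked above `y` on `p`, or `x` appears on `p`
while `y` does not. -/
def prefers {α : Type} (p : PrefList α) (x y : α) : Prop :=
  [x, y].Sublist p.val ∨ (x ∈ p.val ∧ y ∉ p.val)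

/-- Strict preference over possible outcomes, where `none` means being unmatched:
being matched to someone on one's list is better than being unmatched, which is
better than being matched to someone not on one's list. -/
def outPrefers {α : Type} (p : PrefList α) : Option α → Option α → Prop
  | some x, some y => prefers p x y
  | some x, none => x ∈ p.val
  | none, some y => y ∉ p.val
  | none, none => False

/-- A preference list is full if it ranks every member of the opposite side. -/
def IsFull {α : Type} (p : PrefList α) : Prop := ∀ x : α, x ∈ p.val

/-- A matching between `M` and `W`: a one-to-one mapping between a subset of `M`
and a subset of `W`, recorded as a partial injective function from men to women
(`μ.toFun m = none` meaning that `m` is unmatched). -/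
structure Matching (M W : Type) where
  toFun : M → Option W
  inj : ∀ ⦃m m' : M⦄ ⦃w : W⦄, toFun m = some w → toFun m' = some w → m = m'

/-- Woman `w` strictly prefers man `m` (according to her list `q`) over the partner
matched to her by `μ` (or over remaining unmatched, if `μ` leaves her unmatched). -/
def womanPrefersOver {M W : Type} (q : PrefList M) (μ : Matching M W) (w : W) (m : M) : Prop :=
  (∃ m', μ.toFun m' = some w ∧ prefers q m m') ∨
    ((∀ m', μ.toFun m' ≠ some w) ∧ m ∈ q.val)

/-- `μ` is stable with respect to men's profile `pbar` and women's profile `qbar`: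
there is no man and woman each preferring the other over their match under `μ`, and
no participant is matched with a partner not on their preference list. -/
def IsStable {M W : Type} (pbar : M → PrefList W) (qbar : W → PrefList M)
    (μ : Matching M W) : Prop :=
  ¬ ((∃ m w, outPrefers (pbar m) (some w) (μ.toFun m) ∧ womanPrefersOver (qbar w) μ w m) ∨
     (∃ m w, μ.toFun m = some w ∧ (w ∉ (pbar m).val ∨ m ∉ (qbar w).val)))

/-- `C` is `qbar`-stable: `C pbar` is stable with respect to `pbar` and `qbar` for
every men's profile `pbar`. -/
def IsStableRule {M W : Type} (qbar : W → PrefList M)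
    (C : (M → PrefList W) → Matching M W) : Prop :=
  ∀ pbar, IsStable pbar qbar (C pbar)

/-- `C` is the `M`-optimal stable matching rule `C^qbar`: it maps each men's profile
`pbar` to a stable matching that every man weakly prefers to every stable matching. -/
def IsMOptimalStableRule {M W : Type} (qbar : W → PrefList M)
    (C : (M → PrefList W) → Matching M W) : Prop :=
  ∀ pbar, IsStable pbar qbar (C pbar) ∧
    ∀ μ, IsStable pbar qbar μ → ∀ m, ¬ outPrefers (pbar m) (μ.toFun m) ((C pbar).toFun m)

/-- `C` is strategy-proof for man `m`. -/
def StrategyProofFor {M W : Type} [DecidableEq M]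
    (C : (M → PrefList W) → Matching M W) (m : M) : Prop :=
  ∀ (pbar : M → PrefList W) (p' : PrefList W),
    ¬ outPrefers (pbar m) ((C (Function.update pbar m p')).toFun m) ((C pbar).toFun m)

/-- A women's profile `qbar` is cyclical if there are men `a`, `b`, `c` and women
`x`, `y` with `a ≻ₓ b ≻ₓ c ≻_y a`. -/
def Cyclical {M W : Type} (qbar : W → PrefList M) : Prop :=
  ∃ (a b c : M) (x y : W),
    prefers (qbar x) a b ∧ prefers (qbar x) b c ∧ prefers (qbar y) c a

/-- A one-side-querying extensive-form matching mechanism for `M` over `W`: a rooted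
tree each of whose leaves is labeled by a matching and each of whose internal nodes
queries a man; the edges out of an internal node querying `q` are the fibers of the
function `next` (two preference lists for `q` lie on the same outgoing edge iff they
are routed to the same subtree). -/
inductive Mech (M W : Type) : Type
  | leaf (μ : Matching M W)
  | node (q : M) (next : PrefList W → Mech M W)

/-- The matching rule implemented by a mechanism: route the profile from the root to
a leaf and output that leaf's matching. -/
def Mech.run {M W : Type} : Mech M W → (M → PrefList W) → Matching M W
  | .leaf μ, _ => μ
  | .node q next, pbar => (next (pbar q)).run pbar

/-- Auxiliary definition of obvious strategy-proofness for man `m`: `P` is the set of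
profiles passing through the current node. At each node querying `m`, for all profiles
`pbar`, `pbar'` passing through the node at which `m`'s lists diverge (are routed to
distinct subtrees), the outcome of `pbar'` is not strictly preferred (according to
`pbar m`) to the outcome of `pbar`. -/
def Mech.OSPAux {M W : Type} (m : M) : Mech M W → Set (M → PrefList W) → Prop
  | .leaf _, _ => True
  | .node q next, P =>
      (q = m → ∀ pbar ∈ P, ∀ pbar' ∈ P, next (pbar m) ≠ next (pbar' m) →
        ¬ outPrefers (pbar m) (((next (pbar' m)).run pbar').toFun m)
            (((next (pbar m)).run pbar).toFun m)) ∧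
      ∀ p : PrefList W, Mech.OSPAux m (next p) {pbar ∈ P | next (pbar q) = next p}

/-- `I` is obviously strategy-proof (OSP) for man `m`. -/
def Mech.OSPFor {M W : Type} (I : Mech M W) (m : M) : Prop :=
  Mech.OSPAux m I Set.univ

/-- A matching rule is OSP-implementable if it is implemented by some mechanism that
is OSP for every man. -/
def OSPImplementable {M W : Type} (C : (M → PrefList W) → Matching M W) : Prop :=
  ∃ I : Mech M W, (∀ m : M, I.OSPFor m) ∧ ∀ pbar, I.run pbar = C pbar

/-- A two-sides-querying extensive-form matching mechanism: internal nodes may query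
either a man (about his preference list over `W`) or a woman (about her preference
list over `M`). -/
inductive Mech2 (M W : Type) : Type
  | leaf (μ : Matching M W)
  | nodeM (q : M) (next : PrefList W → Mech2 M W)
  | nodeW (q : W) (next : PrefList M → Mech2 M W)

/-- The two-sides-querying matching rule implemented by a two-sides-querying mechanism. -/
def Mech2.run {M W : Type} :
    Mech2 M W → (M → PrefList W) → (W → PrefList M) → Matching M W
  | .leaf μ, _, _ => μ
  | .nodeM q next, pbar, qbar => (next (pbar q)).run pbar qbar
  | .nodeW q next, pbar, qbar => (next (qbar q)).run pbar qbar

/-- Auxiliary definition of obvious strategy-proofness of a two-sides-querying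
mechanism for man `m`; `P` is the set of two-sided profiles passing through the
current node. -/
def Mech2.OSPAux {M W : Type} (m : M) :
    Mech2 M W → Set ((M → PrefList W) × (W → PrefList M)) → Prop
  | .leaf _, _ => True
  | .nodeM q next, P =>
      (q = m → ∀ r ∈ P, ∀ r' ∈ P, next (r.1 m) ≠ next (r'.1 m) →
        ¬ outPrefers (r.1 m) (((next (r'.1 m)).run r'.1 r'.2).toFun m)
            (((next (r.1 m)).run r.1 r.2).toFun m)) ∧
      ∀ p : PrefList W, Mech2.OSPAux m (next p) {r ∈ P | next (r.1 q) = next p}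
  | .nodeW q next, P =>
      ∀ p : PrefList M, Mech2.OSPAux m (next p) {r ∈ P | next (r.2 q) = next p}

/-- A two-sides-querying mechanism `I` is obviously strategy-proof (OSP) for man `m`. -/
def Mech2.OSPForM {M W : Type} (I : Mech2 M W) (m : M) : Prop :=
  Mech2.OSPAux m I Set.univ
namespace AGOSP

set_option linter.unusedSectionVars false

open List

section ListLemmas

variable {α : Type}

lemma pair_sublist_mem {x y : α} {l : List α} (h : [x, y].Sublist l) : x ∈ l ∧ y ∈ l :=
  ⟨h.subset (by simp), h.subset (by simp)⟩

lemma nodup_pair_antisymm {x y : α} {l : List α} (hn : l.Nodup)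
    (h1 : [x, y].Sublist l) (h2 : [y, x].Sublist l) : False := by
  induction l with
  | nil => simp at h1
  | cons a t ih =>
    have hn' : t.Nodup := hn.of_cons
    have hat : a ∉ t := (List.nodup_cons.1 hn).1
    cases h1 with
    | cons _ h1' =>
      cases h2 with
      | cons _ h2' => exact ih hn' h1' h2'
      | cons_cons _ h2' => exact hat ((pair_sublist_mem h1').2)
    | cons_cons _ h1' =>
      cases h2 with
      | cons _ h2' => exact hat ((pair_sublist_mem h2').2)
      | cons_cons _ h2' => exact hat (h2'.subset (by simp))

lemma nodup_pair_irrefl {x : α} {l : List α} (hn : l.Nodup) (h : [x, x].Sublist l) : False :=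
  nodup_pair_antisymm hn h h

lemma pair_sublist_total {x y : α} {l : List α} (hx : x ∈ l) (hy : y ∈ l) (hxy : x ≠ y) :
    [x, y].Sublist l ∨ [y, x].Sublist l := by
  induction l with
  | nil => simp at hx
  | cons a t ih =>
    rcases eq_or_ne x a with rfl | hxa
    · exact Or.inl ((List.cons_sublist_cons).2 (List.singleton_sublist.2
        (List.mem_of_ne_of_mem hxy.symm hy)))
    · rcases eq_or_ne y a with rfl | hya
      · exact Or.inr ((List.cons_sublist_cons).2 (List.singleton_sublist.2
          (List.mem_of_ne_of_mem hxy hx)))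
      · exact (ih (List.mem_of_ne_of_mem hxa hx) (List.mem_of_ne_of_mem hya hy)).imp
          (fun h => h.cons a) (fun h => h.cons a)

lemma head?_mem' {x : α} {l : List α} (h : l.head? = some x) : x ∈ l := by
  cases l with
  | nil => simp at h
  | cons a t => simp at h; simp [h]

lemma head?_pair {x y : α} {l : List α} (h : l.head? = some x) (hy : y ∈ l) (hxy : y ≠ x) :
    [x, y].Sublist l := by
  cases l with
  | nil => simp at h
  | cons a t =>
    simp at h; subst h
    exact (List.cons_sublist_cons).2 (List.singleton_sublist.2 (List.mem_of_ne_of_mem hxy hy))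

lemma pair_sublist_filter {x y : α} {l : List α} (p : α → Bool) (h : [x, y].Sublist l)
    (hx : p x) (hy : p y) : [x, y].Sublist (l.filter p) := by
  have := h.filter p
  simpa [List.filter, hx, hy] using this

end ListLemmas

section Defs

/-- filter a preference list to a finite set of "active" candidates -/
def fL {α : Type} [DecidableEq α] (S : Finset α) (p : PrefList α) : List α :=
  p.val.filter (fun x => x ∈ S)

lemma mem_fL {α : Type} [DecidableEq α] {S : Finset α} {p : PrefList α} {x : α} :
    x ∈ fL S p ↔ x ∈ p.val ∧ x ∈ S := by
  simp [fL]

lemma fL_sublist {α : Type} [DecidableEq α] (S : Finset α) (p : PrefList α) :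
    (fL S p).Sublist p.val := List.filter_sublist

lemma nodup_fL {α : Type} [DecidableEq α] (S : Finset α) (p : PrefList α) :
    (fL S p).Nodup := p.prop.filter _

/-- filtered preference list as a `PrefList` -/
def fP {α : Type} [DecidableEq α] (S : Finset α) (p : PrefList α) : PrefList α :=
  ⟨fL S p, nodup_fL S p⟩

/-- the top-ranked active candidate -/
def topF {α : Type} [DecidableEq α] (S : Finset α) (p : PrefList α) : Option α :=
  (fL S p).head?

lemma fL_erase {α : Type} [DecidableEq α] (S : Finset α) (p : PrefList α) (a : α) :
    fL (S.erase a) p = (fL S p).filter (fun x => x ≠ a) := by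
  simp only [fL, List.filter_filter]
  apply List.filter_congr
  intro x _
  by_cases h1 : x ∈ S <;> by_cases h2 : x = a <;> simp [Finset.mem_erase, h1, h2]

lemma pair_sublist_fL {α : Type} [DecidableEq α] {S : Finset α} {p : PrefList α} {x y : α}
    (h : [x, y].Sublist p.val) (hx : x ∈ S) (hy : y ∈ S) : [x, y].Sublist (fL S p) :=
  pair_sublist_filter _ h (by simpa) (by simpa)

lemma topF_mem {α : Type} [DecidableEq α] {S : Finset α} {p : PrefList α} {t : α}
    (h : topF S p = some t) : t ∈ p.val ∧ t ∈ S :=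
  mem_fL.1 (head?_mem' h)

lemma topF_erase_ne {α : Type} [DecidableEq α] {S : Finset α} {p : PrefList α} {v t : α}
    (h : topF S p = some v) (hne : t ≠ v) : topF (S.erase t) p = some v := by
  unfold topF at *
  rw [fL_erase]
  rcases hl : fL S p with _ | ⟨a, r⟩
  · rw [hl] at h; simp at h
  · rw [hl] at h
    simp only [List.head?_cons, Option.some.injEq] at h
    subst h
    have hat : a ≠ t := fun hh => hne hh.symm
    simp [List.filter_cons, hat]

end Defs

end AGOSP
namespace AGOSP

section Stability

variable {M W : Type} [DecidableEq M] [DecidableEq W]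

lemma prefers_irrefl {α : Type} {q : PrefList α} {x : α} : ¬ prefers q x x := by
  rintro (h | ⟨h1, h2⟩)
  · exact nodup_pair_irrefl q.prop h
  · exact h2 h1

lemma prefers_antisym {α : Type} {q : PrefList α} {x y : α}
    (h1 : prefers q x y) (h2 : prefers q y x) : False := by
  rcases h1 with h1 | ⟨ha, hb⟩
  · rcases h2 with h2 | ⟨hc, hd⟩
    · exact nodup_pair_antisymm q.prop h1 h2
    · exact hd (pair_sublist_mem h1).1
  · rcases h2 with h2 | ⟨hc, hd⟩
    · exact hb (pair_sublist_mem h2).1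
    · exact hb hc

lemma prefers_total {α : Type} {q : PrefList α} {x y : α}
    (hx : x ∈ q.val) (hy : y ∈ q.val) (hxy : x ≠ y) : prefers q x y ∨ prefers q y x :=
  (pair_sublist_total hx hy hxy).imp Or.inl Or.inl

lemma outPrefers_irrefl {α : Type} {q : PrefList α} {o : Option α} : ¬ outPrefers q o o := by
  cases o with
  | none => simp [outPrefers]
  | some x => exact fun h => prefers_irrefl h

/-- the top active candidate (w.r.t. the *original* list) beats any active outcome -/
lemma topBeats_orig {p : PrefList W} {B : Finset W} {o : Option W}
    (ho : ∀ b, o = some b → b ∈ B) : ¬ outPrefers p o (topF B p) := by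
  rcases h : topF B p with _ | t
  · -- no active candidate on the list
    cases o with
    | none => simp [outPrefers]
    | some b =>
      intro hb
      have hbB : b ∈ B := ho b rfl
      have : b ∉ fL B p := by
        unfold topF at h
        rcases hl : fL B p with _ | _
        · simp
        · rw [hl] at h; simp at h
      exact this (mem_fL.2 ⟨hb, hbB⟩)
  · have htmem := topF_mem h
    cases o with
    | none => exact fun hc => hc htmem.1
    | some b =>
      intro hb
      rcases hb with hb | ⟨hb1, hb2⟩
      · have hbval : b ∈ p.val := (pair_sublist_mem hb).1
        have hbfL : b ∈ fL B p := mem_fL.2 ⟨hbval, ho b rfl⟩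
        by_cases hbt : b = t
        · subst hbt; exact nodup_pair_irrefl p.prop hb
        · have : [t, b].Sublist (fL B p) := head?_pair h hbfL hbt
          exact nodup_pair_antisymm p.prop hb (this.trans (fL_sublist B p))
      · exact hb2 htmem.1

/-- the top active candidate (w.r.t. the filtered list) beats any active outcome -/
lemma topBeats_filtered {p : PrefList W} {B : Finset W} {o : Option W}
    (ho : ∀ b, o = some b → b ∈ fL B p) : ¬ outPrefers (fP B p) o (topF B p) := by
  rcases h : topF B p with _ | t
  · cases o with
    | none => simp [outPrefers]
    | some b =>
      intro hb
      have : b ∈ fL B p := ho b rfl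
      unfold topF at h
      rcases hl : fL B p with _ | _
      · rw [hl] at this; simp at this
      · rw [hl] at h; simp at h
  · cases o with
    | none =>
      intro hc
      exact hc (head?_mem' h)
    | some b =>
      intro hb
      rcases hb with hb | ⟨hb1, hb2⟩
      · have hbfL : b ∈ fL B p := ho b rfl
        by_cases hbt : b = t
        · subst hbt; exact nodup_pair_irrefl (nodup_fL B p) hb
        · exact nodup_pair_antisymm (nodup_fL B p) hb (head?_pair h hbfL hbt)
      · exact hb2 (head?_mem' h)

variable (qbar : W → PrefList M)

/-- sub-market stability -/
def SubStable (A : Finset M) (B : Finset W) (pbar : M → PrefList W) (f : M → Option W) : Prop :=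
  (∀ m ∈ A, ∀ w, f m = some w → w ∈ fL B (pbar m)) ∧
  (∀ m ∈ A, ∀ m' ∈ A, ∀ w, f m = some w → f m' = some w → m = m') ∧
  (∀ m ∈ A, ∀ w ∈ B, outPrefers (fP B (pbar m)) (some w) (f m) →
     ∃ m' ∈ A, f m' = some w ∧ ¬ prefers (qbar w) m m')

/-- sub-market optimality for the men -/
def SubOptimal (A : Finset M) (B : Finset W) (pbar : M → PrefList W) (f : M → Option W) : Prop :=
  ∀ g, SubStable qbar A B pbar g → ∀ m ∈ A, ¬ outPrefers (fP B (pbar m)) (g m) (f m)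

variable {qbar}

/-- if `m₀`'s top active choice `t` exists and `m₀` is `t`'s favourite active man,
then every sub-stable matching matches them. -/
lemma forced_some (hfull : ∀ w : W, IsFull (qbar w)) {A : Finset M} {B : Finset W}
    {pbar : M → PrefList W} {g : M → Option W} (hg : SubStable qbar A B pbar g)
    {m₀ : M} {t : W} (hm₀ : m₀ ∈ A) (htop : topF B (pbar m₀) = some t)
    (hhead : (fL A (qbar t)).head? = some m₀) : g m₀ = some t := by
  by_contra hne
  have htB : t ∈ B := (topF_mem htop).2
  have hman : outPrefers (fP B (pbar m₀)) (some t) (g m₀) := by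
    rcases hgm : g m₀ with _ | w'
    · exact head?_mem' htop
    · have hw' : w' ∈ fL B (pbar m₀) := hg.1 m₀ hm₀ w' hgm
      have hwt : w' ≠ t := fun hh => hne (by rw [hgm, hh])
      exact Or.inl (head?_pair htop hw' hwt)
  obtain ⟨m', hm', hgm', hnp⟩ := hg.2.2 m₀ hm₀ t htB hman
  have hm'ne : m' ≠ m₀ := by
    rintro rfl; exact hne hgm'
  have hm'fL : m' ∈ fL A (qbar t) := mem_fL.2 ⟨hfull t m', hm'⟩
  exact hnp (Or.inl ((head?_pair hhead hm'fL hm'ne).trans (fL_sublist A (qbar t))))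

/-- if `m₀` has no active woman on his list, every sub-stable matching leaves him single -/
lemma forced_none {A : Finset M} {B : Finset W}
    {pbar : M → PrefList W} {g : M → Option W} (hg : SubStable qbar A B pbar g)
    {m₀ : M} (hm₀ : m₀ ∈ A) (htop : topF B (pbar m₀) = none) : g m₀ = none := by
  rcases hgm : g m₀ with _ | w
  · rfl
  · have hw : w ∈ fL B (pbar m₀) := hg.1 m₀ hm₀ w hgm
    unfold topF at htop
    rcases hl : fL B (pbar m₀) with _ | _
    · rw [hl] at hw; simp at hw
    · rw [hl] at htop; simp at htop

/-- restriction of a sub-stable matching after removing a matched pair -/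
lemma restrict_some {A : Finset M} {B : Finset W} {pbar : M → PrefList W} {g : M → Option W}
    (hg : SubStable qbar A B pbar g) {m₀ : M} {t : W} (hm₀ : m₀ ∈ A) (hgm₀ : g m₀ = some t) :
    SubStable qbar (A.erase m₀) (B.erase t) pbar g := by
  have hc1 : ∀ m ∈ A.erase m₀, ∀ w, g m = some w → w ∈ fL (B.erase t) (pbar m) := by
    intro m hm w hgm
    obtain ⟨hmne, hmA⟩ := Finset.mem_erase.1 hm
    have hw := hg.1 m hmA w hgm
    have hwt : w ≠ t := by
      rintro rfl
      exact hmne (hg.2.1 m hmA m₀ hm₀ w hgm hgm₀)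
    rw [mem_fL] at hw ⊢
    exact ⟨hw.1, Finset.mem_erase.2 ⟨hwt, hw.2⟩⟩
  refine ⟨hc1, ?_, ?_⟩
  · intro m hm m' hm' w h1 h2
    exact hg.2.1 m (Finset.mem_erase.1 hm).2 m' (Finset.mem_erase.1 hm').2 w h1 h2
  · intro m hm w hw hman
    obtain ⟨hmne, hmA⟩ := Finset.mem_erase.1 hm
    obtain ⟨hwt, hwB⟩ := Finset.mem_erase.1 hw
    -- lift the man-side preference to the bigger market
    have hman' : outPrefers (fP B (pbar m)) (some w) (g m) := by
      rcases hgm : g m with _ | w'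
      · rw [hgm] at hman
        have : w ∈ fL (B.erase t) (pbar m) := hman
        rw [mem_fL] at this
        exact mem_fL.2 ⟨this.1, hwB⟩
      · rw [hgm] at hman
        have hw' : w' ∈ fL (B.erase t) (pbar m) := hc1 m hm w' hgm
        rcases hman with hs | ⟨h1, h2⟩
        · refine Or.inl (hs.trans ?_)
          show (fL (B.erase t) (pbar m)).Sublist (fL B (pbar m))
          rw [fL_erase]; exact List.filter_sublist
        · exact absurd hw' h2
    obtain ⟨m', hm', hgm', hnp⟩ := hg.2.2 m hmA w hwB hman'
    have : m' ≠ m₀ := by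
      rintro rfl
      rw [hgm₀] at hgm'
      exact hwt (by injection hgm'.symm)
    exact ⟨m', Finset.mem_erase.2 ⟨this, hm'⟩, hgm', hnp⟩

/-- restriction of a sub-stable matching after removing an unmatched man -/
lemma restrict_none {A : Finset M} {B : Finset W} {pbar : M → PrefList W} {g : M → Option W}
    (hg : SubStable qbar A B pbar g) {m₀ : M} (hgm₀ : g m₀ = none) :
    SubStable qbar (A.erase m₀) B pbar g := by
  refine ⟨fun m hm => hg.1 m (Finset.mem_erase.1 hm).2,
    fun m hm m' hm' w h1 h2 => hg.2.1 m (Finset.mem_erase.1 hm).2 m' (Finset.mem_erase.1 hm').2 w h1 h2,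
    ?_⟩
  intro m hm w hw hman
  obtain ⟨m', hm', hgm', hnp⟩ := hg.2.2 m (Finset.mem_erase.1 hm).2 w hw hman
  have : m' ≠ m₀ := by
    rintro rfl; rw [hgm₀] at hgm'; exact (by simp at hgm')
  exact ⟨m', Finset.mem_erase.2 ⟨this, hm'⟩, hgm', hnp⟩

/-- lifting optimality comparisons from the smaller market to the bigger one -/
lemma opt_lift {B : Finset W} {t : W} {pm : PrefList W} {go fo : Option W}
    (hgo : ∀ x, go = some x → x ∈ fL (B.erase t) pm)
    (hfo : ∀ x, fo = some x → x ∈ fL (B.erase t) pm)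
    (h : ¬ outPrefers (fP (B.erase t) pm) go fo) : ¬ outPrefers (fP B pm) go fo := by
  intro hbig
  apply h
  cases go with
  | none =>
    cases fo with
    | none => exact hbig
    | some y =>
      exact absurd ((hfo y rfl)) (by
        have : y ∉ fL B pm := hbig
        intro hy
        exact this (by rw [fL_erase] at hy; exact (List.filter_sublist).subset hy))
  | some x =>
    have hx : x ∈ fL (B.erase t) pm := hgo x rfl
    cases fo with
    | none => exact hx
    | some y =>
      have hy : y ∈ fL (B.erase t) pm := hfo y rfl
      rcases hbig with hs | ⟨h1, h2⟩
      · -- pair sublist in fL B, both survive the extra filter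
        have hxt : x ≠ t := (Finset.mem_erase.1 (mem_fL.1 hx).2).1
        have hyt : y ≠ t := (Finset.mem_erase.1 (mem_fL.1 hy).2).1
        refine Or.inl ?_
        show [x, y].Sublist (fL (B.erase t) pm)
        rw [fL_erase]
        exact pair_sublist_filter _ hs (by simp [hxt]) (by simp [hyt])
      · exact absurd (by rw [fL_erase] at hy; exact (List.filter_sublist).subset hy) h2

end Stability

end AGOSP
namespace AGOSP

section Ext

variable {M W : Type} [DecidableEq M] [DecidableEq W] {qbar : W → PrefList M}

lemma topF_none_iff {α : Type} [DecidableEq α] {S : Finset α} {p : PrefList α} :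
    topF S p = none ↔ fL S p = [] := by
  unfold topF; exact List.head?_eq_none_iff

lemma fL_erase_subset {α : Type} [DecidableEq α] {S : Finset α} {p : PrefList α} {a x : α}
    (h : x ∈ fL (S.erase a) p) : x ∈ fL S p := by
  rw [mem_fL] at h ⊢
  exact ⟨h.1, (Finset.mem_erase.1 h.2).2⟩

lemma mem_fL_erase {α : Type} [DecidableEq α] {S : Finset α} {p : PrefList α} {a x : α}
    (h : x ∈ fL S p) (hxa : x ≠ a) : x ∈ fL (S.erase a) p := by
  rw [mem_fL] at h ⊢
  exact ⟨h.1, Finset.mem_erase.2 ⟨hxa, h.2⟩⟩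

/-- extend a sub-stable matching by one forced pair -/
lemma ext_some_stable {A : Finset M} {B : Finset W} {pbar : M → PrefList W}
    {f : M → Option W} {m₀ : M} {t : W}
    (hm₀ : m₀ ∈ A) (htop : topF B (pbar m₀) = some t) (hf0 : f m₀ = some t)
    (hsub : SubStable qbar (A.erase m₀) (B.erase t) pbar f)
    (h2 : ∀ m ∈ A, m ≠ m₀ → prefers (qbar t) m m₀ →
      ¬ outPrefers (fP B (pbar m)) (some t) (f m)) :
    SubStable qbar A B pbar f := by
  have hc1 : ∀ m ∈ A, ∀ w, f m = some w → w ∈ fL B (pbar m) := by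
    intro m hm w hfm
    rcases eq_or_ne m m₀ with rfl | hne
    · rw [hf0] at hfm; injection hfm with hfm; subst hfm
      exact head?_mem' htop
    · exact fL_erase_subset (hsub.1 m (Finset.mem_erase.2 ⟨hne, hm⟩) w hfm)
  refine ⟨hc1, ?_, ?_⟩
  · intro m hm m' hm' w h1 h2'
    by_cases hmm : m = m₀
    · by_cases hmm' : m' = m₀
      · rw [hmm, hmm']
      · exfalso
        rw [hmm, hf0] at h1
        have ht : w = t := by injection h1 with h; exact h.symm
        subst ht
        have h3 := hsub.1 m' (Finset.mem_erase.2 ⟨hmm', hm'⟩) w h2'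
        exact (Finset.mem_erase.1 (mem_fL.1 h3).2).1 rfl
    · by_cases hmm' : m' = m₀
      · exfalso
        rw [hmm', hf0] at h2'
        have ht : w = t := by injection h2' with h; exact h.symm
        subst ht
        have h3 := hsub.1 m (Finset.mem_erase.2 ⟨hmm, hm⟩) w h1
        exact (Finset.mem_erase.1 (mem_fL.1 h3).2).1 rfl
      · exact hsub.2.1 m (Finset.mem_erase.2 ⟨hmm, hm⟩) m' (Finset.mem_erase.2 ⟨hmm', hm'⟩) w h1 h2'
  · intro m hm w hw hman
    rcases eq_or_ne m m₀ with rfl | hne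
    · -- m₀ got his top active choice: no blocking from him
      exfalso
      rw [hf0] at hman
      rcases hman with hs | ⟨h1', h2'⟩
      · have hwfl : w ∈ fL B (pbar m) := (pair_sublist_mem hs).1
        rcases eq_or_ne w t with rfl | hwt
        · exact nodup_pair_irrefl (nodup_fL B (pbar m)) hs
        · exact nodup_pair_antisymm (nodup_fL B (pbar m)) hs (head?_pair htop hwfl hwt)
      · exact h2' (head?_mem' htop)
    · rcases eq_or_ne w t with rfl | hwt
      · exact ⟨m₀, hm₀, hf0, fun hp => h2 m hm hne hp hman⟩
      · -- blocking pair inside the smaller market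
        have hman' : outPrefers (fP (B.erase t) (pbar m)) (some w) (f m) := by
          rcases hfm : f m with _ | w'
          · rw [hfm] at hman
            exact mem_fL_erase hman hwt
          · rw [hfm] at hman
            have hw' : w' ∈ fL (B.erase t) (pbar m) :=
              hsub.1 m (Finset.mem_erase.2 ⟨hne, hm⟩) w' hfm
            rcases hman with hs | ⟨h1', h2'⟩
            · have hw't : w' ≠ t := (Finset.mem_erase.1 (mem_fL.1 hw').2).1
              refine Or.inl ?_
              show [w, w'].Sublist (fL (B.erase t) (pbar m))
              rw [fL_erase]
              exact pair_sublist_filter _ hs (by simp [hwt]) (by simp [hw't])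
            · exact absurd (fL_erase_subset hw') h2'
        obtain ⟨m', hm', hfm', hnp⟩ := hsub.2.2 m (Finset.mem_erase.2 ⟨hne, hm⟩) w
          (Finset.mem_erase.2 ⟨hwt, hw⟩) hman'
        exact ⟨m', (Finset.mem_erase.1 hm').2, hfm', hnp⟩

lemma ext_some_opt {A : Finset M} {B : Finset W} {pbar : M → PrefList W}
    {f : M → Option W} {m₀ : M} {t : W}
    (hm₀ : m₀ ∈ A) (hf0 : f m₀ = some t)
    (hc1 : ∀ m ∈ A.erase m₀, ∀ w, f m = some w → w ∈ fL (B.erase t) (pbar m))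
    (hopt : SubOptimal qbar (A.erase m₀) (B.erase t) pbar f)
    (hforce : ∀ g, SubStable qbar A B pbar g → g m₀ = some t) :
    SubOptimal qbar A B pbar f := by
  intro g hg m hm
  rcases eq_or_ne m m₀ with rfl | hne
  · rw [hforce g hg, hf0]; exact outPrefers_irrefl
  · have hres := restrict_some hg hm₀ (hforce g hg)
    have h := hopt g hres m (Finset.mem_erase.2 ⟨hne, hm⟩)
    exact opt_lift (fun x hx => hres.1 m (Finset.mem_erase.2 ⟨hne, hm⟩) x hx)
      (fun x hx => hc1 m (Finset.mem_erase.2 ⟨hne, hm⟩) x hx) h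

lemma ext_none_stable {A : Finset M} {B : Finset W} {pbar : M → PrefList W}
    {f : M → Option W} {m₀ : M}
    (hm₀ : m₀ ∈ A) (htop : topF B (pbar m₀) = none) (hf0 : f m₀ = none)
    (hsub : SubStable qbar (A.erase m₀) B pbar f) :
    SubStable qbar A B pbar f := by
  refine ⟨?_, ?_, ?_⟩
  · intro m hm w hfm
    rcases eq_or_ne m m₀ with rfl | hne
    · rw [hf0] at hfm; exact (by simp at hfm)
    · exact hsub.1 m (Finset.mem_erase.2 ⟨hne, hm⟩) w hfm
  · intro m hm m' hm' w h1 h2'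
    rcases eq_or_ne m m₀ with rfl | hne
    · rw [hf0] at h1; exact (by simp at h1)
    · rcases eq_or_ne m' m₀ with rfl | hne'
      · rw [hf0] at h2'; exact (by simp at h2')
      · exact hsub.2.1 m (Finset.mem_erase.2 ⟨hne, hm⟩) m' (Finset.mem_erase.2 ⟨hne', hm'⟩) w h1 h2'
  · intro m hm w hw hman
    rcases eq_or_ne m m₀ with rfl | hne
    · exfalso
      rw [hf0] at hman
      have h3 : w ∈ fL B (pbar m) := hman
      rw [topF_none_iff.1 htop] at h3
      simp at h3
    · obtain ⟨m', hm', hfm', hnp⟩ := hsub.2.2 m (Finset.mem_erase.2 ⟨hne, hm⟩) w hw hman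
      exact ⟨m', (Finset.mem_erase.1 hm').2, hfm', hnp⟩

lemma ext_none_opt {A : Finset M} {B : Finset W} {pbar : M → PrefList W}
    {f : M → Option W} {m₀ : M}
    (hm₀ : m₀ ∈ A) (htop : topF B (pbar m₀) = none) (hf0 : f m₀ = none)
    (hopt : SubOptimal qbar (A.erase m₀) B pbar f) :
    SubOptimal qbar A B pbar f := by
  intro g hg m hm
  rcases eq_or_ne m m₀ with rfl | hne
  · rw [forced_none hg hm₀ htop, hf0]; exact outPrefers_irrefl
  · exact hopt g (restrict_none hg (forced_none hg hm₀ htop)) m (Finset.mem_erase.2 ⟨hne, hm⟩)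

end Ext

section Heads

variable {M W : Type} [DecidableEq M] [DecidableEq W] {qbar : W → PrefList M}

lemma take2_structure {α : Type} {l : List α} {a b : α} (h : l.take 2 = [a, b]) :
    ∃ r, l = a :: b :: r := by
  rcases l with _ | ⟨x, _ | ⟨y, r⟩⟩
  · simp at h
  · simp at h
  · simp at h
    exact ⟨r, by rw [h.1, h.2]⟩

lemma head?_of_take2 {α : Type} {l : List α} {a b : α} (h : l.take 2 = [a, b]) :
    l.head? = some a := by
  obtain ⟨r, rfl⟩ := take2_structure h; rfl

lemma mem_of_mem_take {α : Type} {l : List α} {n : ℕ} {a : α} (h : a ∈ l.take n) : a ∈ l :=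
  (List.take_sublist n l).subset h

lemma take2_eq_of_mem {α : Type} {l : List α} {m₁ m₂ : α}
    (h1 : m₁ ∈ l.take 2) (h2 : m₂ ∈ l.take 2) (hne : m₁ ≠ m₂) :
    l.take 2 = [m₁, m₂] ∨ l.take 2 = [m₂, m₁] := by
  rcases l with _ | ⟨x, _ | ⟨y, r⟩⟩
  · simp at h1
  · simp at h1 h2; exact absurd (h1.trans h2.symm) hne
  · simp at h1 h2
    rcases h1 with rfl | rfl <;> rcases h2 with rfl | rfl <;> simp_all

lemma second_best_pair {α : Type} {l : List α} {a b m : α} (h : l.take 2 = [a, b])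
    (hm : m ∈ l) (hma : m ≠ a) (hmb : m ≠ b) : [b, m].Sublist l := by
  obtain ⟨r, rfl⟩ := take2_structure h
  have : m ∈ r := by
    rcases List.mem_cons.1 hm with h' | h'
    · exact absurd h' hma
    · rcases List.mem_cons.1 h' with h'' | h''
      · exact absurd h'' hmb
      · exact h''
  exact ((List.cons_sublist_cons).2 (List.singleton_sublist.2 this)).cons a

/-- if woman `t`'s two favourite active men are `m₂ ≻ m₁`, no other active man beats `m₁` -/
lemma no_third_beats (hfull : ∀ w : W, IsFull (qbar w)) {A : Finset M} {t : W} {m₁ m₂ m : M}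
    (h : (fL A (qbar t)).take 2 = [m₂, m₁]) (hm : m ∈ A) (hm1 : m ≠ m₁) (hm2 : m ≠ m₂) :
    ¬ prefers (qbar t) m m₁ := by
  intro hp
  have hmfl : m ∈ fL A (qbar t) := mem_fL.2 ⟨hfull t m, hm⟩
  have hs : [m₁, m].Sublist (fL A (qbar t)) := second_best_pair h hmfl hm2 hm1
  have hm1A : m₁ ∈ A := (mem_fL.1 (mem_of_mem_take (by rw [h]; simp))).2
  rcases hp with hp | ⟨h1, h2⟩
  · exact nodup_pair_antisymm (nodup_fL A (qbar t)) (pair_sublist_fL hp hm hm1A) hs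
  · exact h2 (hfull t m₁)

lemma beats_eq_second (hfull : ∀ w : W, IsFull (qbar w)) {A : Finset M} {t : W} {m₁ m₂ m' : M}
    (h : (fL A (qbar t)).take 2 = [m₂, m₁]) (hm' : m' ∈ A) (hp : prefers (qbar t) m' m₁) :
    m' = m₂ := by
  by_contra hne
  have hne1 : m' ≠ m₁ := by rintro rfl; exact prefers_irrefl hp
  exact no_third_beats hfull h hm' hne1 hne hp

/-- no active man beats the head of a woman's active list -/
lemma no_beats_head (hfull : ∀ w : W, IsFull (qbar w)) {A : Finset M} {t : W} {m₀ m : M}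
    (hhead : (fL A (qbar t)).head? = some m₀) (hm : m ∈ A) (hne : m ≠ m₀) :
    ¬ prefers (qbar t) m m₀ := by
  intro hp
  have hmfl : m ∈ fL A (qbar t) := mem_fL.2 ⟨hfull t m, hm⟩
  have hm₀A : m₀ ∈ A := (mem_fL.1 (head?_mem' hhead)).2
  rcases hp with hp | ⟨h1, h2⟩
  · exact nodup_pair_antisymm (nodup_fL A (qbar t)) (pair_sublist_fL hp hm hm₀A)
      (head?_pair hhead hmfl hne)
  · exact h2 (hfull t m₀)

/-- acyclicity: the top active man of any woman is among the top two of every woman -/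
lemma top_mem_take2 (hfull : ∀ w : W, IsFull (qbar w)) (hacyc : ¬ Cyclical qbar)
    {A : Finset M} {x w : W} {a : M} (hx : (fL A (qbar x)).head? = some a) :
    a ∈ (fL A (qbar w)).take 2 := by
  by_contra hnot
  have haA : a ∈ A := (mem_fL.1 (head?_mem' hx)).2
  have haw : a ∈ fL A (qbar w) := mem_fL.2 ⟨hfull w a, haA⟩
  rcases hl : fL A (qbar w) with _ | ⟨u, _ | ⟨v, r⟩⟩
  · rw [hl] at haw; simp at haw
  · rw [hl] at haw hnot; simp at haw hnot; exact hnot haw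
  · rw [hl] at haw hnot
    simp only [List.take, List.mem_cons, List.mem_singleton] at hnot
    have hau : a ≠ u := fun hh => hnot (by simp [hh])
    have hav : a ≠ v := fun hh => hnot (by simp [hh])
    have har : a ∈ r := by
      rcases List.mem_cons.1 haw with h' | h'
      · exact absurd h' hau
      · rcases List.mem_cons.1 h' with h'' | h''
        · exact absurd h'' hav
        · exact h''
    have hsub : (fL A (qbar w)).Sublist (qbar w).val := fL_sublist A (qbar w)
    rw [hl] at hsub
    have pref1 : prefers (qbar w) u v :=
      Or.inl (((List.take_sublist 2 (u :: v :: r)).trans hsub))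
    have pref2 : prefers (qbar w) v a :=
      Or.inl ((((List.cons_sublist_cons).2 (List.singleton_sublist.2 har)).cons u).trans hsub)
    have pref3 : prefers (qbar x) a u := by
      have huA : u ∈ A := (mem_fL.1 (by rw [hl]; simp)).2
      have hufl : u ∈ fL A (qbar x) := mem_fL.2 ⟨hfull x u, huA⟩
      exact Or.inl ((head?_pair hx hufl (fun hh => hau hh.symm)).trans (fL_sublist A (qbar x)))
    exact hacyc ⟨u, v, a, w, x, pref1, pref2, pref3⟩

/-- the heads of women's active lists after removing `m₁` -/
lemma head_erase_of_take2 {A : Finset M} {q : PrefList M} {m₁ m₂ : M} (hne : m₁ ≠ m₂)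
    (h : (fL A q).take 2 = [m₁, m₂] ∨ (fL A q).take 2 = [m₂, m₁]) :
    (fL (A.erase m₁) q).head? = some m₂ := by
  rw [fL_erase]
  rcases h with h | h
  · obtain ⟨r, hl⟩ := take2_structure h
    rw [hl]
    have h1 : ¬ (m₁ ≠ m₁) := by simp
    have h2 : (m₂ ≠ m₁) := fun hh => hne hh.symm
    simp [List.filter_cons, h2]
  · obtain ⟨r, hl⟩ := take2_structure h
    rw [hl]
    have h2 : (m₂ ≠ m₁) := fun hh => hne hh.symm
    simp [List.filter_cons, h2]

end Heads

end AGOSP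
namespace AGOSP

section Mechanism

variable {M W : Type} [DecidableEq M] [DecidableEq W]

/-- build a `Matching` from a partial function, defaulting to the empty matching -/
noncomputable def mkM (f : M → Option W) : Matching M W :=
  @dite _ (∀ ⦃m m' : M⦄ ⦃w : W⦄, f m = some w → f m' = some w → m = m') (Classical.dec _)
    (fun h => ⟨f, h⟩) (fun _ => ⟨fun _ => none, fun m _ _ h1 => (by simp at h1)⟩)

lemma mkM_toFun {f : M → Option W}
    (h : ∀ ⦃m m' : M⦄ ⦃w : W⦄, f m = some w → f m' = some w → m = m') :
    (mkM f).toFun = f := by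
  unfold mkM
  rw [dif_pos h]

/-- invariant on the partial assignment carried through the mechanism -/
def GoodSigma (A : Finset M) (B : Finset W) (σ : M → Option W) : Prop :=
  (∀ m ∈ A, σ m = none) ∧ (∀ m w, σ m = some w → w ∉ B) ∧
  (∀ ⦃m m' : M⦄ ⦃w : W⦄, σ m = some w → σ m' = some w → m = m')

lemma goodSigma_update_some {A : Finset M} {B : Finset W} {σ : M → Option W}
    (h : GoodSigma A B σ) {m₁ : M} {t : W} (ht : t ∈ B) :
    GoodSigma (A.erase m₁) (B.erase t) (Function.update σ m₁ (some t)) := by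
  refine ⟨?_, ?_, ?_⟩
  · intro m hm
    rw [Function.update_of_ne (Finset.mem_erase.1 hm).1]
    exact h.1 m (Finset.mem_erase.1 hm).2
  · intro m w hw
    by_cases hm : m = m₁
    · subst hm; rw [Function.update_self] at hw
      have hwt : w = t := by injection hw with h'; exact h'.symm
      subst hwt
      simp
    · rw [Function.update_of_ne hm] at hw
      intro hwB
      exact h.2.1 m w hw (Finset.mem_erase.1 hwB).2
  · intro m m' w h1 h2
    by_cases hm : m = m₁ <;> by_cases hm' : m' = m₁
    · rw [hm, hm']
    · exfalso
      subst hm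
      rw [Function.update_self] at h1
      rw [Function.update_of_ne hm'] at h2
      have hwt : w = t := by injection h1 with h'; exact h'.symm
      subst hwt
      exact h.2.1 m' w h2 ht
    · exfalso
      subst hm'
      rw [Function.update_self] at h2
      rw [Function.update_of_ne hm] at h1
      have hwt : w = t := by injection h2 with h'; exact h'.symm
      subst hwt
      exact h.2.1 m w h1 ht
    · rw [Function.update_of_ne hm] at h1
      rw [Function.update_of_ne hm'] at h2
      exact h.2.2 h1 h2

lemma goodSigma_erase {A : Finset M} {B : Finset W} {σ : M → Option W}
    (h : GoodSigma A B σ) (m₁ : M) : GoodSigma (A.erase m₁) B σ :=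
  ⟨fun m hm => h.1 m (Finset.mem_erase.1 hm).2, h.2.1, h.2.2⟩

variable (qbar : W → PrefList M)

/-- The OSP mechanism: repeatedly find the at-most-two active men who are ranked first by
some active woman; query them in a "clinch or pass" pattern. -/
noncomputable def mech : Finset M → Finset W → (M → Option W) → Mech M W := fun A B σ =>
  if hA : A.Nonempty then
    if hB : B.Nonempty then
      match h0 : (fL A (qbar hB.choose)).head? with
      | none => Mech.leaf (mkM σ)
      | some m₁ =>
        if hall : ∀ w ∈ B, (fL A (qbar w)).head? = some m₁ then
          -- `m₁` is every active woman's favourite: dictator step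
          Mech.node m₁ (fun p => match (fL B p).head? with
            | some t => mech (A.erase m₁) (B.erase t) (Function.update σ m₁ (some t))
            | none => mech (A.erase m₁) B σ)
        else
          have hex : ∃ w ∈ B, (fL A (qbar w)).head? ≠ some m₁ := by
            push_neg at hall; exact hall
          match h2 : (fL A (qbar hex.choose)).head? with
          | none => Mech.leaf (mkM σ)
          | some m₂ =>
            let g3 : Mech M W := Mech.node m₁ (fun p => match (fL B p).head? with
              | some t => mech (A.erase m₁) (B.erase t) (Function.update σ m₁ (some t))
              | none => mech (A.erase m₁) B σ)
            let g2 : Mech M W := Mech.node m₂ (fun p => match (fL B p).head? with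
              | some v => if (fL A (qbar v)).head? = some m₂ then
                    mech (A.erase m₂) (B.erase v) (Function.update σ m₂ (some v))
                  else g3
              | none => mech (A.erase m₂) B σ)
            Mech.node m₁ (fun p => match (fL B p).head? with
              | some t => if (fL A (qbar t)).head? = some m₁ then
                    mech (A.erase m₁) (B.erase t) (Function.update σ m₁ (some t))
                  else g2
              | none => mech (A.erase m₁) B σ)
    else Mech.leaf (mkM σ)
  else Mech.leaf (mkM σ)
termination_by A B σ => A.card
decreasing_by
  all_goals first
    | exact Finset.card_erase_lt_of_mem ((mem_fL.1 (head?_mem' h0)).2)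
    | exact Finset.card_erase_lt_of_mem ((mem_fL.1 (head?_mem' h2)).2)

end Mechanism

end AGOSP
namespace AGOSP

section RunSpec

variable {M W : Type} [DecidableEq M] [DecidableEq W] {qbar : W → PrefList M}

lemma not_manPrefers_top {B : Finset W} {p : PrefList W} {t w : W}
    (ht : topF B p = some t) : ¬ outPrefers (fP B p) (some w) (some t) := by
  rintro (hs | ⟨h1, h2⟩)
  · have hw : w ∈ fL B p := (pair_sublist_mem hs).1
    rcases eq_or_ne w t with rfl | hne
    · exact nodup_pair_irrefl (nodup_fL B p) hs
    · exact nodup_pair_antisymm (nodup_fL B p) hs (head?_pair ht hw hne)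
  · exact h2 (head?_mem' ht)

lemma leafSpec {A : Finset M} {B : Finset W} {σ : M → Option W} {pbar : M → PrefList W}
    (hgs : GoodSigma A B σ) (hAB : ¬A.Nonempty ∨ ¬B.Nonempty) :
    (∀ m, m ∉ A → (mkM σ).toFun m = σ m) ∧ SubStable qbar A B pbar (mkM σ).toFun ∧
      SubOptimal qbar A B pbar (mkM σ).toFun := by
  rw [mkM_toFun hgs.2.2]
  refine ⟨fun m _ => rfl, ⟨?_, ?_, ?_⟩, ?_⟩
  · intro m hm w hfm
    rw [hgs.1 m hm] at hfm
    exact (by simp at hfm)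
  · intro m hm m' hm' w h1 h2
    rw [hgs.1 m hm] at h1
    exact (by simp at h1)
  · intro m hm w hw hman
    rcases hAB with h | h
    · exact absurd ⟨m, hm⟩ h
    · exact absurd ⟨w, hw⟩ h
  · intro g hg m hm
    rcases hAB with h | h
    · exact absurd ⟨m, hm⟩ h
    · rw [hgs.1 m hm]
      rcases hgm : g m with _ | w'
      · simp [outPrefers]
      · have := hg.1 m hm w' hgm
        exact absurd ⟨w', (mem_fL.1 this).2⟩ h

theorem runSpec (hfull : ∀ w : W, IsFull (qbar w)) (hacyc : ¬ Cyclical qbar) :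
    ∀ (n : ℕ) (A : Finset M) (B : Finset W) (σ : M → Option W), A.card ≤ n →
    GoodSigma A B σ → ∀ pbar : M → PrefList W,
      (∀ m, m ∉ A → ((mech qbar A B σ).run pbar).toFun m = σ m) ∧
      SubStable qbar A B pbar ((mech qbar A B σ).run pbar).toFun ∧
      SubOptimal qbar A B pbar ((mech qbar A B σ).run pbar).toFun := by
  intro n
  induction n with
  | zero =>
    intro A B σ hcard hgs pbar
    have hA : ¬ A.Nonempty := by
      rw [Finset.nonempty_iff_ne_empty]
      simp [Finset.card_eq_zero.1 (Nat.le_zero.1 hcard)]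
    rw [mech, dif_neg hA]
    exact leafSpec hgs (Or.inl hA)
  | succ n ih =>
    intro A B σ hcard hgs pbar
    by_cases hA : A.Nonempty
    · by_cases hB : B.Nonempty
      · rw [mech, dif_pos hA, dif_pos hB]
        rcases h0 : (fL A (qbar hB.choose)).head? with _ | m₁
        · exfalso
          obtain ⟨m, hm⟩ := hA
          have hmem : m ∈ fL A (qbar hB.choose) := mem_fL.2 ⟨hfull _ m, hm⟩
          rw [List.head?_eq_none_iff.1 h0] at hmem
          simp at hmem
        · simp only [h0]
          have hm₁A : m₁ ∈ A := (mem_fL.1 (head?_mem' h0)).2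
          have hcard' : ∀ m ∈ A, (A.erase m).card ≤ n := by
            intro m hm
            have := Finset.card_erase_lt_of_mem hm
            omega
          by_cases hall : ∀ w ∈ B, (fL A (qbar w)).head? = some m₁
          · rw [dif_pos hall]
            simp only [Mech.run]
            rcases ht : (fL B (pbar m₁)).head? with _ | t
            · simp only [ht]
              obtain ⟨hoff, hsub, hopt⟩ := ih (A.erase m₁) B σ (hcard' m₁ hm₁A)
                (goodSigma_erase hgs m₁) pbar
              have hf0 : ((mech qbar (A.erase m₁) B σ).run pbar).toFun m₁ = none := by
                rw [hoff m₁ (Finset.notMem_erase m₁ A)]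
                exact hgs.1 m₁ hm₁A
              refine ⟨?_, ext_none_stable hm₁A ht hf0 hsub, ext_none_opt hm₁A ht hf0 hopt⟩
              intro m hm
              exact hoff m (fun hc => hm (Finset.mem_erase.1 hc).2)
            · simp only [ht]
              have htB : t ∈ B := (mem_fL.1 (head?_mem' ht)).2
              obtain ⟨hoff, hsub, hopt⟩ := ih (A.erase m₁) (B.erase t)
                (Function.update σ m₁ (some t)) (hcard' m₁ hm₁A)
                (goodSigma_update_some hgs htB) pbar
              have hf0 : ((mech qbar (A.erase m₁) (B.erase t)
                  (Function.update σ m₁ (some t))).run pbar).toFun m₁ = some t := by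
                rw [hoff m₁ (Finset.notMem_erase m₁ A), Function.update_self]
              refine ⟨?_, ?_, ?_⟩
              · intro m hm
                have hne : m ≠ m₁ := fun hc => hm (hc ▸ hm₁A)
                rw [hoff m (fun hc => hm (Finset.mem_erase.1 hc).2), Function.update_of_ne hne]
              · refine ext_some_stable hm₁A ht hf0 hsub ?_
                intro m hm hne hp
                exact absurd hp (no_beats_head hfull (hall t htB) hm hne)
              · refine ext_some_opt hm₁A hf0 hsub.1 hopt ?_
                intro g hg
                exact forced_some hfull hg hm₁A ht (hall t htB)
          · rw [dif_neg hall]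
            have hex : ∃ w ∈ B, (fL A (qbar w)).head? ≠ some m₁ := by
              push_neg at hall; exact hall
            split
            · exfalso
              obtain ⟨m, hm⟩ := hA
              have heq' : (fL A (qbar hex.choose)).head? = none := by assumption
              have hmem : m ∈ fL A (qbar hex.choose) := mem_fL.2 ⟨hfull _ m, hm⟩
              rw [List.head?_eq_none_iff.1 heq'] at hmem
              simp at hmem
            · next m₂ heq =>
              have h2 : (fL A (qbar hex.choose)).head? = some m₂ := heq
              obtain ⟨hw'B, hw'ne⟩ := hex.choose_spec
              have hm₂ : m₂ ≠ m₁ := fun hc => hw'ne (hc ▸ h2)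
              have hm₂A : m₂ ∈ A := (mem_fL.1 (head?_mem' h2)).2
              have htake2 : ∀ w ∈ B, (fL A (qbar w)).take 2 = [m₁, m₂] ∨
                  (fL A (qbar w)).take 2 = [m₂, m₁] := fun w _ =>
                take2_eq_of_mem (top_mem_take2 hfull hacyc h0) (top_mem_take2 hfull hacyc h2)
                  hm₂.symm
              have hheads : ∀ w ∈ B, (fL A (qbar w)).head? = some m₁ ∨
                  (fL A (qbar w)).head? = some m₂ := fun w hw =>
                (htake2 w hw).imp head?_of_take2 head?_of_take2
              have hheadsE1 : ∀ w ∈ B, (fL (A.erase m₁) (qbar w)).head? = some m₂ :=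
                fun w hw => head_erase_of_take2 hm₂.symm (htake2 w hw)
              simp only [Mech.run]
              rcases ht : (fL B (pbar m₁)).head? with _ | t
              · simp only [ht]
                obtain ⟨hoff, hsub, hopt⟩ := ih (A.erase m₁) B σ (hcard' m₁ hm₁A)
                  (goodSigma_erase hgs m₁) pbar
                have hf0 : ((mech qbar (A.erase m₁) B σ).run pbar).toFun m₁ = none := by
                  rw [hoff m₁ (Finset.notMem_erase m₁ A)]
                  exact hgs.1 m₁ hm₁A
                refine ⟨?_, ext_none_stable hm₁A ht hf0 hsub, ext_none_opt hm₁A ht hf0 hopt⟩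
                intro m hm
                exact hoff m (fun hc => hm (Finset.mem_erase.1 hc).2)
              · simp only [ht]
                have htB : t ∈ B := (mem_fL.1 (head?_mem' ht)).2
                split_ifs with hcl
                · -- m₁ clinches t
                  obtain ⟨hoff, hsub, hopt⟩ := ih (A.erase m₁) (B.erase t)
                    (Function.update σ m₁ (some t)) (hcard' m₁ hm₁A)
                    (goodSigma_update_some hgs htB) pbar
                  have hf0 : ((mech qbar (A.erase m₁) (B.erase t)
                      (Function.update σ m₁ (some t))).run pbar).toFun m₁ = some t := by
                    rw [hoff m₁ (Finset.notMem_erase m₁ A), Function.update_self]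
                  refine ⟨?_, ?_, ?_⟩
                  · intro m hm
                    have hne : m ≠ m₁ := fun hc => hm (hc ▸ hm₁A)
                    rw [hoff m (fun hc => hm (Finset.mem_erase.1 hc).2),
                      Function.update_of_ne hne]
                  · refine ext_some_stable hm₁A ht hf0 hsub ?_
                    intro m hm hne hp
                    exact absurd hp (no_beats_head hfull hcl hm hne)
                  · refine ext_some_opt hm₁A hf0 hsub.1 hopt ?_
                    intro g hg
                    exact forced_some hfull hg hm₁A ht hcl
                · -- m₁ passes
                  have hpass1 : (fL A (qbar t)).head? = some m₂ :=
                    (hheads t htB).resolve_left hcl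
                  have htk : (fL A (qbar t)).take 2 = [m₂, m₁] := by
                    rcases htake2 t htB with h | h
                    · exfalso
                      rw [head?_of_take2 h] at hpass1
                      exact hm₂ (by injection hpass1 with h'; exact h'.symm)
                    · exact h
                  simp only [Mech.run]
                  rcases hv : (fL B (pbar m₂)).head? with _ | v
                  · simp only [hv]
                    obtain ⟨hoff, hsub, hopt⟩ := ih (A.erase m₂) B σ (hcard' m₂ hm₂A)
                      (goodSigma_erase hgs m₂) pbar
                    have hf0 : ((mech qbar (A.erase m₂) B σ).run pbar).toFun m₂ = none := by
                      rw [hoff m₂ (Finset.notMem_erase m₂ A)]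
                      exact hgs.1 m₂ hm₂A
                    refine ⟨?_, ext_none_stable hm₂A hv hf0 hsub,
                      ext_none_opt hm₂A hv hf0 hopt⟩
                    intro m hm
                    exact hoff m (fun hc => hm (Finset.mem_erase.1 hc).2)
                  · simp only [hv]
                    have hvB : v ∈ B := (mem_fL.1 (head?_mem' hv)).2
                    split_ifs with hcl2
                    · -- m₂ clinches v
                      obtain ⟨hoff, hsub, hopt⟩ := ih (A.erase m₂) (B.erase v)
                        (Function.update σ m₂ (some v)) (hcard' m₂ hm₂A)
                        (goodSigma_update_some hgs hvB) pbar
                      have hf0 : ((mech qbar (A.erase m₂) (B.erase v)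
                          (Function.update σ m₂ (some v))).run pbar).toFun m₂ = some v := by
                        rw [hoff m₂ (Finset.notMem_erase m₂ A), Function.update_self]
                      refine ⟨?_, ?_, ?_⟩
                      · intro m hm
                        have hne : m ≠ m₂ := fun hc => hm (hc ▸ hm₂A)
                        rw [hoff m (fun hc => hm (Finset.mem_erase.1 hc).2),
                          Function.update_of_ne hne]
                      · refine ext_some_stable hm₂A hv hf0 hsub ?_
                        intro m hm hne hp
                        exact absurd hp (no_beats_head hfull hcl2 hm hne)
                      · refine ext_some_opt hm₂A hf0 hsub.1 hopt ?_
                        intro g hg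
                        exact forced_some hfull hg hm₂A hv hcl2
                    · -- both passed: m₁ takes t, m₂ will take v
                      have hpass2 : (fL A (qbar v)).head? = some m₁ :=
                        (hheads v hvB).resolve_right hcl2
                      have htkv : (fL A (qbar v)).take 2 = [m₁, m₂] := by
                        rcases htake2 v hvB with h | h
                        · exact h
                        · exfalso
                          rw [head?_of_take2 h] at hpass2
                          exact hm₂ (Option.some.inj hpass2)
                      have htv : t ≠ v := by
                        rintro rfl
                        rw [hpass1] at hpass2
                        exact hm₂ (Option.some.inj hpass2)
                      simp only [Mech.run, ht]
                      obtain ⟨hoff, hsub, hopt⟩ := ih (A.erase m₁) (B.erase t)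
                        (Function.update σ m₁ (some t)) (hcard' m₁ hm₁A)
                        (goodSigma_update_some hgs htB) pbar
                      set f := ((mech qbar (A.erase m₁) (B.erase t)
                          (Function.update σ m₁ (some t))).run pbar).toFun with hfdef
                      have hf0 : f m₁ = some t := by
                        rw [hoff m₁ (Finset.notMem_erase m₁ A), Function.update_self]
                      have hm₂E : m₂ ∈ A.erase m₁ := Finset.mem_erase.2 ⟨hm₂, hm₂A⟩
                      have htopE : topF (B.erase t) (pbar m₂) = some v := topF_erase_ne hv htv
                      have hfm₂ : f m₂ = some v :=
                        forced_some hfull hsub hm₂E htopE (hheadsE1 v hvB)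
                      refine ⟨?_, ?_, ?_⟩
                      · intro m hm
                        have hne : m ≠ m₁ := fun hc => hm (hc ▸ hm₁A)
                        rw [hoff m (fun hc => hm (Finset.mem_erase.1 hc).2),
                          Function.update_of_ne hne]
                      · refine ext_some_stable hm₁A ht hf0 hsub ?_
                        intro m hm hne hp
                        have hmm₂ : m = m₂ := beats_eq_second hfull htk hm hp
                        subst hmm₂
                        rw [hfm₂]
                        exact not_manPrefers_top hv
                      · -- optimality (possible swap)
                        intro g hg m hm
                        have hdi : g m₁ = some t ∨ (g m₁ = some v ∧ g m₂ = some t) := by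
                          by_cases hgm1 : g m₁ = some t
                          · exact Or.inl hgm1
                          · right
                            have hman : outPrefers (fP B (pbar m₁)) (some t) (g m₁) := by
                              rcases hgm : g m₁ with _ | w'
                              · exact head?_mem' ht
                              · have hw' := hg.1 m₁ hm₁A w' hgm
                                have hwt : w' ≠ t := fun hc => hgm1 (by rw [hgm, hc])
                                exact Or.inl (head?_pair ht hw' hwt)
                            obtain ⟨m', hm'A, hgm', hnp⟩ := hg.2.2 m₁ hm₁A t htB hman
                            have hm'ne : m' ≠ m₁ := by rintro rfl; exact hgm1 hgm'
                            have hpref : prefers (qbar t) m' m₁ := by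
                              rcases prefers_total (hfull t m') (hfull t m₁) hm'ne with h | h
                              · exact h
                              · exact absurd h hnp
                            have hm'm₂ : m' = m₂ := beats_eq_second hfull htk hm'A hpref
                            subst hm'm₂
                            have hmanv : outPrefers (fP B (pbar m')) (some v) (g m') := by
                              rw [hgm']
                              have htfl : t ∈ fL B (pbar m') := hg.1 m' hm₂A t hgm'
                              exact Or.inl (head?_pair hv htfl htv)
                            obtain ⟨m'', hm''A, hgm'', hnp2⟩ := hg.2.2 m' hm₂A v hvB hmanv
                            have hm''ne : m'' ≠ m' := by
                              rintro rfl
                              rw [hgm''] at hgm'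
                              exact htv (by injection hgm' with h'; exact h'.symm)
                            have hpref2 : prefers (qbar v) m'' m' := by
                              rcases prefers_total (hfull v m'') (hfull v m') hm''ne with h | h
                              · exact h
                              · exact absurd h hnp2
                            have hm''m₁ : m'' = m₁ := beats_eq_second hfull htkv hm''A hpref2
                            subst hm''m₁
                            exact ⟨hgm'', hgm'⟩
                        rcases hdi with hgm1 | ⟨hgm1, hgm2⟩
                        · rcases eq_or_ne m m₁ with rfl | hne
                          · rw [hgm1, hf0]; exact outPrefers_irrefl
                          · have hmE : m ∈ A.erase m₁ := Finset.mem_erase.2 ⟨hne, hm⟩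
                            have hres := restrict_some hg hm₁A hgm1
                            exact opt_lift (fun x hx => hres.1 m hmE x hx)
                              (fun x hx => hsub.1 m hmE x hx) (hopt g hres m hmE)
                        · -- swap case: unswap g
                          set g' := Function.update (Function.update g m₁ (some t)) m₂ (some v)
                            with hg'def
                          have hg'm₁ : g' m₁ = some t := by
                            rw [hg'def, Function.update_of_ne (Ne.symm hm₂),
                              Function.update_self]
                          have hg'm₂ : g' m₂ = some v := by
                            rw [hg'def, Function.update_self]
                          have hg'other : ∀ m', m' ≠ m₁ → m' ≠ m₂ → g' m' = g m' := by
                            intro m' h1 h2'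
                            rw [hg'def, Function.update_of_ne h2', Function.update_of_ne h1]
                          have hg'st : SubStable qbar A B pbar g' := by
                            refine ⟨?_, ?_, ?_⟩
                            · intro a ha w hw'
                              rcases eq_or_ne a m₁ with heqa | ha1
                              · rw [heqa, hg'm₁] at hw'
                                have hb' : w = t := by injection hw' with h'; exact h'.symm
                                subst hb'
                                rw [heqa]
                                exact head?_mem' ht
                              · rcases eq_or_ne a m₂ with heqa2 | ha2
                                · rw [heqa2, hg'm₂] at hw'
                                  have hb' : w = v := by injection hw' with h'; exact h'.symm
                                  subst hb'
                                  rw [heqa2]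
                                  exact head?_mem' hv
                                · rw [hg'other a ha1 ha2] at hw'
                                  exact hg.1 a ha w hw'
                            · intro a ha b hb w h1 h2'
                              rcases eq_or_ne a m₁ with heqa | ha1
                              · rcases eq_or_ne b m₁ with heqb | hb1
                                · rw [heqa, heqb]
                                · exfalso
                                  rw [heqa, hg'm₁] at h1
                                  rcases eq_or_ne b m₂ with heqb2 | hb2
                                  · rw [heqb2, hg'm₂] at h2'
                                    rw [← h1] at h2'
                                    exact htv (Option.some.inj h2').symm
                                  · rw [hg'other b hb1 hb2] at h2'
                                    rw [← h1] at h2'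
                                    exact hb2 (hg.2.1 b hb m₂ hm₂A t h2' hgm2)
                              · rcases eq_or_ne a m₂ with heqa2 | ha2
                                · rcases eq_or_ne b m₂ with heqb2 | hb2
                                  · rw [heqa2, heqb2]
                                  · exfalso
                                    rw [heqa2, hg'm₂] at h1
                                    rcases eq_or_ne b m₁ with heqb | hb1
                                    · rw [heqb, hg'm₁] at h2'
                                      rw [← h1] at h2'
                                      exact htv (Option.some.inj h2')
                                    · rw [hg'other b hb1 hb2] at h2'
                                      rw [← h1] at h2'
                                      exact hb1 (hg.2.1 b hb m₁ hm₁A v h2' hgm1)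
                                · rcases eq_or_ne b m₁ with heqb | hb1
                                  · exfalso
                                    rw [heqb, hg'm₁] at h2'
                                    rw [hg'other a ha1 ha2] at h1
                                    rw [← h2'] at h1
                                    exact ha2 (hg.2.1 a ha m₂ hm₂A t h1 hgm2)
                                  · rcases eq_or_ne b m₂ with heqb2 | hb2
                                    · exfalso
                                      rw [heqb2, hg'm₂] at h2'
                                      rw [hg'other a ha1 ha2] at h1
                                      rw [← h2'] at h1
                                      exact ha1 (hg.2.1 a ha m₁ hm₁A v h1 hgm1)
                                    · rw [hg'other a ha1 ha2] at h1
                                      rw [hg'other b hb1 hb2] at h2'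
                                      exact hg.2.1 a ha b hb w h1 h2'
                            · intro a ha w hw' hman
                              rcases eq_or_ne a m₁ with heqa | ha1
                              · rw [heqa, hg'm₁] at hman
                                exact absurd hman (not_manPrefers_top ht)
                              · rcases eq_or_ne a m₂ with heqa2 | ha2
                                · rw [heqa2, hg'm₂] at hman
                                  exact absurd hman (not_manPrefers_top hv)
                                · rw [hg'other a ha1 ha2] at hman
                                  obtain ⟨m'', hm''A, hgm'', hnp⟩ := hg.2.2 a ha w hw' hman
                                  rcases eq_or_ne m'' m₁ with heqc | hc1
                                  · rw [heqc, hgm1] at hgm''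
                                    have hb' : w = v := by injection hgm'' with h'; exact h'.symm
                                    subst hb'
                                    exact ⟨m₂, hm₂A, hg'm₂,
                                      no_third_beats hfull htkv ha ha2 ha1⟩
                                  · rcases eq_or_ne m'' m₂ with heqc2 | hc2
                                    · rw [heqc2, hgm2] at hgm''
                                      have hb' : w = t := by injection hgm'' with h'; exact h'.symm
                                      subst hb'
                                      exact ⟨m₁, hm₁A, hg'm₁,
                                        no_third_beats hfull htk ha ha1 ha2⟩
                                    · refine ⟨m'', hm''A, ?_, hnp⟩
                                      rw [hg'other m'' hc1 hc2]
                                      exact hgm''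
                          rcases eq_or_ne m m₁ with heq1 | hne1
                          · rw [heq1, hgm1, hf0]
                            have hvfl : ∀ b, (some v : Option W) = some b →
                                b ∈ fL B (pbar m₁) := by
                              intro b hb
                              have hb' : v = b := by injection hb
                              subst hb'
                              exact hg.1 m₁ hm₁A v hgm1
                            have h6 := topBeats_filtered (p := pbar m₁) (B := B) hvfl
                            rw [show topF B (pbar m₁) = some t from ht] at h6
                            exact h6
                          · rcases eq_or_ne m m₂ with heq2 | hne2
                            · rw [heq2, hgm2, hfm₂]
                              have htfl : ∀ b, (some t : Option W) = some b →
                                  b ∈ fL B (pbar m₂) := by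
                                intro b hb
                                have hb' : t = b := by injection hb
                                subst hb'
                                exact hg.1 m₂ hm₂A t hgm2
                              have h6 := topBeats_filtered (p := pbar m₂) (B := B) htfl
                              rw [show topF B (pbar m₂) = some v from hv] at h6
                              exact h6
                            · have hmE : m ∈ A.erase m₁ := Finset.mem_erase.2 ⟨hne1, hm⟩
                              have hres := restrict_some hg'st hm₁A hg'm₁
                              have h5 := hopt g' hres m hmE
                              rw [hg'other m hne1 hne2] at h5
                              refine opt_lift ?_ (fun x hx => hsub.1 m hmE x hx) h5
                              intro x hx
                              have := hres.1 m hmE x (by rw [hg'other m hne1 hne2]; exact hx)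
                              exact this
      · rw [mech, dif_pos hA, dif_neg hB]
        exact leafSpec hgs (Or.inr hB)
    · rw [mech, dif_neg hA]
      exact leafSpec hgs (Or.inl hA)

end RunSpec

end AGOSP
namespace AGOSP

section OspSpec

variable {M W : Type} [DecidableEq M] [DecidableEq W] {qbar : W → PrefList M}

lemma not_outP_none_of {p : PrefList W} {o : Option W}
    (ho : ∀ x, o = some x → x ∈ p.val) : ¬ outPrefers p none o := by
  cases o with
  | none => simp [outPrefers]
  | some x => exact fun h => h (ho x rfl)

lemma not_outP_of_empty {p : PrefList W} {B : Finset W} {b : W}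
    (h1 : fL B p = []) (hb : b ∈ B) : ¬ outPrefers p (some b) none := by
  intro hmem
  have : b ∈ fL B p := mem_fL.2 ⟨hmem, hb⟩
  rw [h1] at this
  simp at this

theorem ospSpec (hfull : ∀ w : W, IsFull (qbar w)) (hacyc : ¬ Cyclical qbar) :
    ∀ (n : ℕ) (A : Finset M) (B : Finset W) (σ : M → Option W), A.card ≤ n →
    GoodSigma A B σ → ∀ (m : M) (P : Set (M → PrefList W)),
      Mech.OSPAux m (mech qbar A B σ) P := by
  have RS : ∀ (A' : Finset M) (B' : Finset W) (σ' : M → Option W), GoodSigma A' B' σ' →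
      ∀ r : M → PrefList W,
        (∀ mm, mm ∉ A' → ((mech qbar A' B' σ').run r).toFun mm = σ' mm) ∧
        SubStable qbar A' B' r ((mech qbar A' B' σ').run r).toFun ∧
        SubOptimal qbar A' B' r ((mech qbar A' B' σ').run r).toFun :=
    fun A' B' σ' hgs' r => runSpec hfull hacyc A'.card A' B' σ' le_rfl hgs' r
  intro n
  induction n with
  | zero =>
    intro A B σ hcard hgs m P
    have hA : ¬ A.Nonempty := by
      rw [Finset.nonempty_iff_ne_empty]
      simp [Finset.card_eq_zero.1 (Nat.le_zero.1 hcard)]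
    rw [mech, dif_neg hA]
    trivial
  | succ n ih =>
    intro A B σ hcard hgs m P
    by_cases hA : A.Nonempty
    swap
    · rw [mech, dif_neg hA]; trivial
    by_cases hB : B.Nonempty
    swap
    · rw [mech, dif_pos hA, dif_neg hB]; trivial
    rw [mech, dif_pos hA, dif_pos hB]
    rcases h0 : (fL A (qbar hB.choose)).head? with _ | m₁
    · simp only [h0]; trivial
    simp only [h0]
    have hm₁A : m₁ ∈ A := (mem_fL.1 (head?_mem' h0)).2
    have hcard' : ∀ mm ∈ A, (A.erase mm).card ≤ n := by
      intro mm hmm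
      have := Finset.card_erase_lt_of_mem hmm
      omega
    by_cases hall : ∀ w ∈ B, (fL A (qbar w)).head? = some m₁
    · -- dictator node
      rw [dif_pos hall]
      refine ⟨?_, ?_⟩
      · intro heqm pbar hP pbar' hP' hnext
        rw [← heqm]
        rcases h1 : (fL B (pbar m₁)).head? with _ | t <;>
          rcases h2 : (fL B (pbar' m₁)).head? with _ | t' <;>
          simp only [h1, h2]
        · rw [(RS _ _ _ (goodSigma_erase hgs m₁) pbar).1 m₁ (Finset.notMem_erase m₁ A),
            (RS _ _ _ (goodSigma_erase hgs m₁) pbar').1 m₁ (Finset.notMem_erase m₁ A),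
            hgs.1 m₁ hm₁A]
          simp [outPrefers]
        · have ht'B : t' ∈ B := (mem_fL.1 (head?_mem' h2)).2
          rw [(RS _ _ _ (goodSigma_erase hgs m₁) pbar).1 m₁ (Finset.notMem_erase m₁ A),
            (RS _ _ _ (goodSigma_update_some hgs ht'B) pbar').1 m₁ (Finset.notMem_erase m₁ A),
            hgs.1 m₁ hm₁A, Function.update_self]
          exact not_outP_of_empty (List.head?_eq_none_iff.1 h1) ht'B
        · have htB : t ∈ B := (mem_fL.1 (head?_mem' h1)).2
          rw [(RS _ _ _ (goodSigma_update_some hgs htB) pbar).1 m₁ (Finset.notMem_erase m₁ A),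
            (RS _ _ _ (goodSigma_erase hgs m₁) pbar').1 m₁ (Finset.notMem_erase m₁ A),
            hgs.1 m₁ hm₁A, Function.update_self]
          exact not_outP_none_of (fun x hx => by
            have : t = x := Option.some.inj hx
            subst this
            exact (topF_mem h1).1)
        · have htB : t ∈ B := (mem_fL.1 (head?_mem' h1)).2
          have ht'B : t' ∈ B := (mem_fL.1 (head?_mem' h2)).2
          rw [(RS _ _ _ (goodSigma_update_some hgs htB) pbar).1 m₁ (Finset.notMem_erase m₁ A),
            (RS _ _ _ (goodSigma_update_some hgs ht'B) pbar').1 m₁ (Finset.notMem_erase m₁ A),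
            Function.update_self, Function.update_self]
          have h6 := topBeats_orig (p := pbar m₁) (B := B) (o := some t')
            (fun b hb => by
              have : t' = b := Option.some.inj hb
              subst this
              exact ht'B)
          rw [show topF B (pbar m₁) = some t from h1] at h6
          exact h6
      · intro p
        rcases hp : (fL B p).head? with _ | t <;> simp only [hp]
        · exact ih (A.erase m₁) B σ (hcard' m₁ hm₁A) (goodSigma_erase hgs m₁) m _
        · exact ih (A.erase m₁) (B.erase t) _ (hcard' m₁ hm₁A)
            (goodSigma_update_some hgs ((mem_fL.1 (head?_mem' hp)).2)) m _
    · -- gadget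
      rw [dif_neg hall]
      have hex : ∃ w ∈ B, (fL A (qbar w)).head? ≠ some m₁ := by
        push_neg at hall; exact hall
      split
      · trivial
      · next m₂ heq =>
        have h2g : (fL A (qbar hex.choose)).head? = some m₂ := heq
        obtain ⟨hw'B, hw'ne⟩ := hex.choose_spec
        have hm₂ : m₂ ≠ m₁ := fun hc => hw'ne (hc ▸ h2g)
        have hm₂A : m₂ ∈ A := (mem_fL.1 (head?_mem' h2g)).2
        have htake2 : ∀ w ∈ B, (fL A (qbar w)).take 2 = [m₁, m₂] ∨
            (fL A (qbar w)).take 2 = [m₂, m₁] := fun w _ =>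
          take2_eq_of_mem (top_mem_take2 hfull hacyc h0) (top_mem_take2 hfull hacyc h2g)
            hm₂.symm
        have hheadsE1 : ∀ w ∈ B, (fL (A.erase m₁) (qbar w)).head? = some m₂ :=
          fun w hw => head_erase_of_take2 hm₂.symm (htake2 w hw)
        have hheadsE2 : ∀ w ∈ B, (fL (A.erase m₂) (qbar w)).head? = some m₁ :=
          fun w hw => head_erase_of_take2 hm₂ ((htake2 w hw).symm)
        -- outcome of m₂ in the subtree g3
        have hg3m₂ : ∀ r : M → PrefList W,
            ((Mech.node m₁ (fun p => match (fL B p).head? with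
              | some t => mech qbar (A.erase m₁) (B.erase t) (Function.update σ m₁ (some t))
              | none => mech qbar (A.erase m₁) B σ)).run r).toFun m₂ = topF B (r m₂) ∨
            ∃ t', (fL B (r m₁)).head? = some t' ∧
              ((Mech.node m₁ (fun p => match (fL B p).head? with
                | some t => mech qbar (A.erase m₁) (B.erase t) (Function.update σ m₁ (some t))
                | none => mech qbar (A.erase m₁) B σ)).run r).toFun m₂ =
                topF (B.erase t') (r m₂) := by
          intro r
          simp only [Mech.run]
          rcases h1r : (fL B (r m₁)).head? with _ | t'
          · left
            simp only [h1r]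
            obtain ⟨_, hsub, _⟩ := RS (A.erase m₁) B σ (goodSigma_erase hgs m₁) r
            have hm₂E : m₂ ∈ A.erase m₁ := Finset.mem_erase.2 ⟨hm₂, hm₂A⟩
            rcases h2r : topF B (r m₂) with _ | u
            · rw [forced_none hsub hm₂E h2r]
            · exact forced_some hfull hsub hm₂E h2r (hheadsE1 u (topF_mem h2r).2)
          · right
            refine ⟨t', rfl, ?_⟩
            simp only [h1r]
            have ht'B : t' ∈ B := (mem_fL.1 (head?_mem' h1r)).2
            obtain ⟨_, hsub, _⟩ := RS (A.erase m₁) (B.erase t')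
              (Function.update σ m₁ (some t')) (goodSigma_update_some hgs ht'B) r
            have hm₂E : m₂ ∈ A.erase m₁ := Finset.mem_erase.2 ⟨hm₂, hm₂A⟩
            rcases h2r : topF (B.erase t') (r m₂) with _ | u
            · rw [forced_none hsub hm₂E h2r]
            · exact forced_some hfull hsub hm₂E h2r
                (hheadsE1 u (Finset.mem_erase.1 (topF_mem h2r).2).2)
        -- outcome of m₁ in the subtree g3 (he answers and takes his top)
        have hg3m₁ : ∀ r : M → PrefList W,
            ((Mech.node m₁ (fun p => match (fL B p).head? with
              | some t => mech qbar (A.erase m₁) (B.erase t) (Function.update σ m₁ (some t))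
              | none => mech qbar (A.erase m₁) B σ)).run r).toFun m₁ = topF B (r m₁) := by
          intro r
          simp only [Mech.run]
          rcases h1r : (fL B (r m₁)).head? with _ | t'
          · simp only [h1r]
            rw [(RS _ _ _ (goodSigma_erase hgs m₁) r).1 m₁ (Finset.notMem_erase m₁ A),
              hgs.1 m₁ hm₁A]
            exact h1r.symm
          · simp only [h1r]
            have ht'B : t' ∈ B := (mem_fL.1 (head?_mem' h1r)).2
            rw [(RS _ _ _ (goodSigma_update_some hgs ht'B) r).1 m₁ (Finset.notMem_erase m₁ A),
              Function.update_self]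
            exact h1r.symm
        -- outcome of m₁ in the subtree g2
        have hg2m₁ : ∀ r : M → PrefList W,
            ((Mech.node m₂ (fun p => match (fL B p).head? with
              | some v => if (fL A (qbar v)).head? = some m₂ then
                    mech qbar (A.erase m₂) (B.erase v) (Function.update σ m₂ (some v))
                  else Mech.node m₁ (fun p' => match (fL B p').head? with
                    | some t => mech qbar (A.erase m₁) (B.erase t)
                        (Function.update σ m₁ (some t))
                    | none => mech qbar (A.erase m₁) B σ)
              | none => mech qbar (A.erase m₂) B σ)).run r).toFun m₁ = topF B (r m₁) ∨
            ∃ v, (fL B (r m₂)).head? = some v ∧ (fL A (qbar v)).head? = some m₂ ∧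
              ((Mech.node m₂ (fun p => match (fL B p).head? with
                | some v => if (fL A (qbar v)).head? = some m₂ then
                      mech qbar (A.erase m₂) (B.erase v) (Function.update σ m₂ (some v))
                    else Mech.node m₁ (fun p' => match (fL B p').head? with
                      | some t => mech qbar (A.erase m₁) (B.erase t)
                          (Function.update σ m₁ (some t))
                      | none => mech qbar (A.erase m₁) B σ)
                | none => mech qbar (A.erase m₂) B σ)).run r).toFun m₁ =
                topF (B.erase v) (r m₁) := by
          intro r
          simp only [Mech.run]
          rcases hvr : (fL B (r m₂)).head? with _ | v
          · left
            simp only [hvr]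
            obtain ⟨_, hsub, _⟩ := RS (A.erase m₂) B σ (goodSigma_erase hgs m₂) r
            have hm₁E : m₁ ∈ A.erase m₂ := Finset.mem_erase.2 ⟨Ne.symm hm₂, hm₁A⟩
            rcases h1r : topF B (r m₁) with _ | tr
            · rw [forced_none hsub hm₁E h1r]
            · exact forced_some hfull hsub hm₁E h1r (hheadsE2 tr (topF_mem h1r).2)
          · simp only [hvr]
            by_cases hcl2 : (fL A (qbar v)).head? = some m₂
            · right
              refine ⟨v, rfl, hcl2, ?_⟩
              rw [if_pos hcl2]
              have hvB : v ∈ B := (mem_fL.1 (head?_mem' hvr)).2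
              obtain ⟨_, hsub, _⟩ := RS (A.erase m₂) (B.erase v)
                (Function.update σ m₂ (some v)) (goodSigma_update_some hgs hvB) r
              have hm₁E : m₁ ∈ A.erase m₂ := Finset.mem_erase.2 ⟨Ne.symm hm₂, hm₁A⟩
              rcases h1r : topF (B.erase v) (r m₁) with _ | tr
              · rw [forced_none hsub hm₁E h1r]
              · exact forced_some hfull hsub hm₁E h1r
                  (hheadsE2 tr (Finset.mem_erase.1 (topF_mem h1r).2).2)
            · left
              rw [if_neg hcl2]
              exact hg3m₁ r
        refine ⟨?_, ?_⟩
        · -- entry node: the querying of m₁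
          intro heqm pbar hP pbar' hP' hnext
          rw [← heqm]
          rw [← heqm] at hnext
          rcases h1 : (fL B (pbar m₁)).head? with _ | t <;>
            rcases h2 : (fL B (pbar' m₁)).head? with _ | t' <;>
            simp only [h1, h2] <;> simp only [h1, h2] at hnext
          · -- both empty
            rw [(RS _ _ _ (goodSigma_erase hgs m₁) pbar).1 m₁ (Finset.notMem_erase m₁ A),
              (RS _ _ _ (goodSigma_erase hgs m₁) pbar').1 m₁ (Finset.notMem_erase m₁ A),
              hgs.1 m₁ hm₁A]
            simp [outPrefers]
          · -- truth empty, deviation some t'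
            rw [(RS _ _ _ (goodSigma_erase hgs m₁) pbar).1 m₁ (Finset.notMem_erase m₁ A),
              hgs.1 m₁ hm₁A]
            have ht'B : t' ∈ B := (mem_fL.1 (head?_mem' h2)).2
            have hemp := List.head?_eq_none_iff.1 h1
            by_cases hcl' : (fL A (qbar t')).head? = some m₁
            · rw [if_pos hcl']
              rw [(RS _ _ _ (goodSigma_update_some hgs ht'B) pbar').1 m₁
                (Finset.notMem_erase m₁ A), Function.update_self]
              exact not_outP_of_empty hemp ht'B
            · rw [if_neg hcl']
              rcases hg2m₁ pbar' with hL | ⟨v, hvr, hclv, hR⟩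
              · rw [hL]
                rcases hS : topF B (pbar' m₁) with _ | s
                · simp [outPrefers]
                · exact not_outP_of_empty hemp (topF_mem hS).2
              · rw [hR]
                rcases hS : topF (B.erase v) (pbar' m₁) with _ | s
                · simp [outPrefers]
                · exact not_outP_of_empty hemp (Finset.mem_erase.1 (topF_mem hS).2).2
          · -- truth some t, deviation empty
            rw [(RS _ _ _ (goodSigma_erase hgs m₁) pbar').1 m₁ (Finset.notMem_erase m₁ A),
              hgs.1 m₁ hm₁A]
            have htB : t ∈ B := (mem_fL.1 (head?_mem' h1)).2
            by_cases hcl : (fL A (qbar t)).head? = some m₁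
            · rw [if_pos hcl]
              rw [(RS _ _ _ (goodSigma_update_some hgs htB) pbar).1 m₁
                (Finset.notMem_erase m₁ A), Function.update_self]
              exact not_outP_none_of (fun x hx => by
                have hb' : t = x := Option.some.inj hx
                subst hb'
                exact (topF_mem h1).1)
            · rw [if_neg hcl]
              rcases hg2m₁ pbar with hL | ⟨v, hvr, hclv, hR⟩
              · rw [hL]
                exact not_outP_none_of (fun x hx => (topF_mem hx).1)
              · rw [hR]
                exact not_outP_none_of (fun x hx => (topF_mem hx).1)
          · -- both some
            have htB : t ∈ B := (mem_fL.1 (head?_mem' h1)).2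
            have ht'B : t' ∈ B := (mem_fL.1 (head?_mem' h2)).2
            by_cases hcl : (fL A (qbar t)).head? = some m₁
            · -- truth clinches: gets top
              rw [if_pos hcl]
              rw [if_pos hcl] at hnext
              rw [(RS _ _ _ (goodSigma_update_some hgs htB) pbar).1 m₁
                (Finset.notMem_erase m₁ A), Function.update_self]
              by_cases hcl' : (fL A (qbar t')).head? = some m₁
              · rw [if_pos hcl']
                rw [(RS _ _ _ (goodSigma_update_some hgs ht'B) pbar').1 m₁
                  (Finset.notMem_erase m₁ A), Function.update_self]
                have h6 := topBeats_orig (p := pbar m₁) (B := B) (o := some t')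
                  (fun b hb => by
                    have hb' : t' = b := Option.some.inj hb
                    subst hb'
                    exact ht'B)
                rw [show topF B (pbar m₁) = some t from h1] at h6
                exact h6
              · rw [if_neg hcl']
                rcases hg2m₁ pbar' with hL | ⟨v, hvr, hclv, hR⟩
                · rw [hL]
                  have h6 := topBeats_orig (p := pbar m₁) (B := B)
                    (o := topF B (pbar' m₁)) (fun b hb => (topF_mem hb).2)
                  rw [show topF B (pbar m₁) = some t from h1] at h6
                  exact h6
                · rw [hR]
                  have h6 := topBeats_orig (p := pbar m₁) (B := B)
                    (o := topF (B.erase v) (pbar' m₁))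
                    (fun b hb => (Finset.mem_erase.1 (topF_mem hb).2).2)
                  rw [show topF B (pbar m₁) = some t from h1] at h6
                  exact h6
            · -- truth passes
              rw [if_neg hcl]
              rw [if_neg hcl] at hnext
              by_cases hcl' : (fL A (qbar t')).head? = some m₁
              · rw [if_pos hcl']
                rw [(RS _ _ _ (goodSigma_update_some hgs ht'B) pbar').1 m₁
                  (Finset.notMem_erase m₁ A), Function.update_self]
                rcases hg2m₁ pbar with hL | ⟨v, hvr, hclv, hR⟩
                · rw [hL]
                  have h6 := topBeats_orig (p := pbar m₁) (B := B) (o := some t')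
                    (fun b hb => by
                      have hb' : t' = b := Option.some.inj hb
                      subst hb'
                      exact ht'B)
                  exact h6
                · rw [hR]
                  have ht'v : t' ≠ v := by
                    rintro rfl
                    rw [hclv] at hcl'
                    exact hm₂ (Option.some.inj hcl')
                  have h6 := topBeats_orig (p := pbar m₁) (B := B.erase v) (o := some t')
                    (fun b hb => by
                      have hb' : t' = b := Option.some.inj hb
                      subst hb'
                      exact Finset.mem_erase.2 ⟨ht'v, ht'B⟩)
                  exact h6
              · -- both pass: not a divergence
                rw [if_neg hcl'] at hnext
                exact absurd rfl hnext
        · -- subtrees of the entry node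
          intro p
          rcases hp : (fL B p).head? with _ | t <;> simp only [hp]
          · exact ih (A.erase m₁) B σ (hcard' m₁ hm₁A) (goodSigma_erase hgs m₁) m _
          · by_cases hcl : (fL A (qbar t)).head? = some m₁
            · rw [if_pos hcl]
              exact ih (A.erase m₁) (B.erase t) _ (hcard' m₁ hm₁A)
                (goodSigma_update_some hgs ((mem_fL.1 (head?_mem' hp)).2)) m _
            · rw [if_neg hcl]
              -- the g2 node, querying m₂
              refine ⟨?_, ?_⟩
              · intro heqm pbar hP pbar' hP' hnext
                rw [← heqm]
                rw [← heqm] at hnext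
                rcases hv : (fL B (pbar m₂)).head? with _ | v <;>
                  rcases hv' : (fL B (pbar' m₂)).head? with _ | v' <;>
                  simp only [hv, hv'] <;> simp only [hv, hv'] at hnext
                · rw [(RS _ _ _ (goodSigma_erase hgs m₂) pbar).1 m₂ (Finset.notMem_erase m₂ A),
                    (RS _ _ _ (goodSigma_erase hgs m₂) pbar').1 m₂ (Finset.notMem_erase m₂ A),
                    hgs.1 m₂ hm₂A]
                  simp [outPrefers]
                · rw [(RS _ _ _ (goodSigma_erase hgs m₂) pbar).1 m₂ (Finset.notMem_erase m₂ A),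
                    hgs.1 m₂ hm₂A]
                  have hv'B : v' ∈ B := (mem_fL.1 (head?_mem' hv')).2
                  have hemp := List.head?_eq_none_iff.1 hv
                  by_cases hcl2' : (fL A (qbar v')).head? = some m₂
                  · rw [if_pos hcl2']
                    rw [(RS _ _ _ (goodSigma_update_some hgs hv'B) pbar').1 m₂
                      (Finset.notMem_erase m₂ A), Function.update_self]
                    exact not_outP_of_empty hemp hv'B
                  · rw [if_neg hcl2']
                    rcases hg3m₂ pbar' with hL | ⟨t'', h1t, hR⟩
                    · rw [hL]
                      rcases hS : topF B (pbar' m₂) with _ | s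
                      · simp [outPrefers]
                      · exact not_outP_of_empty hemp (topF_mem hS).2
                    · rw [hR]
                      rcases hS : topF (B.erase t'') (pbar' m₂) with _ | s
                      · simp [outPrefers]
                      · exact not_outP_of_empty hemp (Finset.mem_erase.1 (topF_mem hS).2).2
                · rw [(RS _ _ _ (goodSigma_erase hgs m₂) pbar').1 m₂ (Finset.notMem_erase m₂ A),
                    hgs.1 m₂ hm₂A]
                  have hvB : v ∈ B := (mem_fL.1 (head?_mem' hv)).2
                  by_cases hcl2 : (fL A (qbar v)).head? = some m₂
                  · rw [if_pos hcl2]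
                    rw [(RS _ _ _ (goodSigma_update_some hgs hvB) pbar).1 m₂
                      (Finset.notMem_erase m₂ A), Function.update_self]
                    exact not_outP_none_of (fun x hx => by
                      have hb' : v = x := Option.some.inj hx
                      subst hb'
                      exact (topF_mem hv).1)
                  · rw [if_neg hcl2]
                    rcases hg3m₂ pbar with hL | ⟨t'', h1t, hR⟩
                    · rw [hL]
                      exact not_outP_none_of (fun x hx => (topF_mem hx).1)
                    · rw [hR]
                      exact not_outP_none_of (fun x hx => (topF_mem hx).1)
                · have hvB : v ∈ B := (mem_fL.1 (head?_mem' hv)).2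
                  have hv'B : v' ∈ B := (mem_fL.1 (head?_mem' hv')).2
                  by_cases hcl2 : (fL A (qbar v)).head? = some m₂
                  · rw [if_pos hcl2]
                    rw [if_pos hcl2] at hnext
                    rw [(RS _ _ _ (goodSigma_update_some hgs hvB) pbar).1 m₂
                      (Finset.notMem_erase m₂ A), Function.update_self]
                    by_cases hcl2' : (fL A (qbar v')).head? = some m₂
                    · rw [if_pos hcl2']
                      rw [(RS _ _ _ (goodSigma_update_some hgs hv'B) pbar').1 m₂
                        (Finset.notMem_erase m₂ A), Function.update_self]
                      have h6 := topBeats_orig (p := pbar m₂) (B := B) (o := some v')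
                        (fun b hb => by
                          have hb' : v' = b := Option.some.inj hb
                          subst hb'
                          exact hv'B)
                      rw [show topF B (pbar m₂) = some v from hv] at h6
                      exact h6
                    · rw [if_neg hcl2']
                      rcases hg3m₂ pbar' with hL | ⟨t'', h1t, hR⟩
                      · rw [hL]
                        have h6 := topBeats_orig (p := pbar m₂) (B := B)
                          (o := topF B (pbar' m₂)) (fun b hb => (topF_mem hb).2)
                        rw [show topF B (pbar m₂) = some v from hv] at h6
                        exact h6
                      · rw [hR]
                        have h6 := topBeats_orig (p := pbar m₂) (B := B)
                          (o := topF (B.erase t'') (pbar' m₂))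
                          (fun b hb => (Finset.mem_erase.1 (topF_mem hb).2).2)
                        rw [show topF B (pbar m₂) = some v from hv] at h6
                        exact h6
                  · -- truth passes to g3
                    rw [if_neg hcl2]
                    rw [if_neg hcl2] at hnext
                    by_cases hcl2' : (fL A (qbar v')).head? = some m₂
                    · rw [if_pos hcl2']
                      rw [(RS _ _ _ (goodSigma_update_some hgs hv'B) pbar').1 m₂
                        (Finset.notMem_erase m₂ A), Function.update_self]
                      have hv'v : v' ≠ v := by
                        rintro rfl
                        exact hcl2 hcl2'
                      rcases hg3m₂ pbar with hL | ⟨t'', h1t, hR⟩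
                      · rw [hL]
                        exact topBeats_orig (p := pbar m₂) (B := B) (o := some v')
                          (fun b hb => by
                            have hb' : v' = b := Option.some.inj hb
                            subst hb'
                            exact hv'B)
                      · rw [hR]
                        by_cases htv'' : t'' = v
                        · subst htv''
                          have h6 := topBeats_orig (p := pbar m₂) (B := B.erase t'')
                            (o := some v') (fun b hb => by
                              have hb' : v' = b := Option.some.inj hb
                              subst hb'
                              exact Finset.mem_erase.2 ⟨hv'v, hv'B⟩)
                          exact h6
                        · have hvE : topF (B.erase t'') (pbar m₂) = some v :=
                            topF_erase_ne hv htv''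
                          rw [hvE]
                          have h6 := topBeats_orig (p := pbar m₂) (B := B) (o := some v')
                            (fun b hb => by
                              have hb' : v' = b := Option.some.inj hb
                              subst hb'
                              exact hv'B)
                          rw [show topF B (pbar m₂) = some v from hv] at h6
                          exact h6
                    · rw [if_neg hcl2'] at hnext
                      exact absurd rfl hnext
              · -- subtrees of the g2 node
                intro p'
                rcases hp' : (fL B p').head? with _ | v <;> simp only [hp']
                · exact ih (A.erase m₂) B σ (hcard' m₂ hm₂A) (goodSigma_erase hgs m₂) m _
                · by_cases hcl2 : (fL A (qbar v)).head? = some m₂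
                  · rw [if_pos hcl2]
                    exact ih (A.erase m₂) (B.erase v) _ (hcard' m₂ hm₂A)
                      (goodSigma_update_some hgs ((mem_fL.1 (head?_mem' hp')).2)) m _
                  · rw [if_neg hcl2]
                    -- the g3 node, querying m₁ again
                    refine ⟨?_, ?_⟩
                    · intro heqm pbar hP hpbar' hP' hnext
                      rw [← heqm]
                      rcases h1 : (fL B (pbar m₁)).head? with _ | t <;>
                        rcases h2 : (fL B (hpbar' m₁)).head? with _ | t' <;>
                        simp only [h1, h2]
                      · rw [(RS _ _ _ (goodSigma_erase hgs m₁) pbar).1 m₁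
                          (Finset.notMem_erase m₁ A),
                          (RS _ _ _ (goodSigma_erase hgs m₁) hpbar').1 m₁
                          (Finset.notMem_erase m₁ A), hgs.1 m₁ hm₁A]
                        simp [outPrefers]
                      · have ht'B : t' ∈ B := (mem_fL.1 (head?_mem' h2)).2
                        rw [(RS _ _ _ (goodSigma_erase hgs m₁) pbar).1 m₁
                          (Finset.notMem_erase m₁ A),
                          (RS _ _ _ (goodSigma_update_some hgs ht'B) hpbar').1 m₁
                          (Finset.notMem_erase m₁ A), hgs.1 m₁ hm₁A, Function.update_self]
                        exact not_outP_of_empty (List.head?_eq_none_iff.1 h1) ht'B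
                      · have htB : t ∈ B := (mem_fL.1 (head?_mem' h1)).2
                        rw [(RS _ _ _ (goodSigma_update_some hgs htB) pbar).1 m₁
                          (Finset.notMem_erase m₁ A),
                          (RS _ _ _ (goodSigma_erase hgs m₁) hpbar').1 m₁
                          (Finset.notMem_erase m₁ A), hgs.1 m₁ hm₁A, Function.update_self]
                        exact not_outP_none_of (fun x hx => by
                          have hb' : t = x := Option.some.inj hx
                          subst hb'
                          exact (topF_mem h1).1)
                      · have htB : t ∈ B := (mem_fL.1 (head?_mem' h1)).2
                        have ht'B : t' ∈ B := (mem_fL.1 (head?_mem' h2)).2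
                        rw [(RS _ _ _ (goodSigma_update_some hgs htB) pbar).1 m₁
                          (Finset.notMem_erase m₁ A),
                          (RS _ _ _ (goodSigma_update_some hgs ht'B) hpbar').1 m₁
                          (Finset.notMem_erase m₁ A), Function.update_self,
                          Function.update_self]
                        have h6 := topBeats_orig (p := pbar m₁) (B := B) (o := some t')
                          (fun b hb => by
                            have hb' : t' = b := Option.some.inj hb
                            subst hb'
                            exact ht'B)
                        rw [show topF B (pbar m₁) = some t from h1] at h6
                        exact h6
                    · intro p''
                      rcases hp'' : (fL B p'').head? with _ | t <;> simp only [hp'']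
                      · exact ih (A.erase m₁) B σ (hcard' m₁ hm₁A) (goodSigma_erase hgs m₁) m _
                      · exact ih (A.erase m₁) (B.erase t) _ (hcard' m₁ hm₁A)
                          (goodSigma_update_some hgs ((mem_fL.1 (head?_mem' hp'')).2)) m _

end OspSpec

end AGOSP
namespace AGOSP

section Bridge

variable {M W : Type} [DecidableEq M] [DecidableEq W] [Fintype M] [Fintype W]
variable {qbar : W → PrefList M}

lemma fL_univ (p : PrefList W) : fL (Finset.univ : Finset W) p = p.val :=
  List.filter_eq_self.2 (by intro a _; simp)

lemma fP_univ (p : PrefList W) : fP (Finset.univ : Finset W) p = p :=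
  Subtype.ext (fL_univ p)

lemma isStable_to_subStable (hfull : ∀ w : W, IsFull (qbar w)) {pbar : M → PrefList W}
    {μ : Matching M W} (hC : IsStable pbar qbar μ) :
    SubStable qbar Finset.univ Finset.univ pbar μ.toFun := by
  refine ⟨?_, ?_, ?_⟩
  · intro m _ w hm
    rw [fL_univ]
    by_contra hw
    exact hC (Or.inr ⟨m, w, hm, Or.inl hw⟩)
  · intro m _ m' _ w h1 h2
    exact μ.inj h1 h2
  · intro m _ w _ hman
    rw [fP_univ] at hman
    by_contra hnone
    push_neg at hnone
    apply hC
    left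
    refine ⟨m, w, hman, ?_⟩
    by_cases hmatched : ∃ m', μ.toFun m' = some w
    · obtain ⟨m', hm'⟩ := hmatched
      exact Or.inl ⟨m', hm', hnone m' (Finset.mem_univ m') hm'⟩
    · push_neg at hmatched
      exact Or.inr ⟨hmatched, hfull w m⟩

lemma isStable_of_subStable (hfull : ∀ w : W, IsFull (qbar w)) {pbar : M → PrefList W}
    {μ : Matching M W} (h : SubStable qbar Finset.univ Finset.univ pbar μ.toFun) :
    IsStable pbar qbar μ := by
  rintro (⟨m, w, hman, hwom⟩ | ⟨m, w, hm, hbad⟩)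
  · rw [← fP_univ (pbar m)] at hman
    obtain ⟨m', _, hm', hnp⟩ := h.2.2 m (Finset.mem_univ m) w (Finset.mem_univ w) hman
    rcases hwom with ⟨m'', hm'', hpref⟩ | ⟨hun, _⟩
    · have heq : m'' = m' := μ.inj hm'' hm'
      subst heq
      exact hnp hpref
    · exact hun m' hm'
  · rcases hbad with hbad | hbad
    · have h3 := h.1 m (Finset.mem_univ m) w hm
      rw [fL_univ] at h3
      exact hbad h3
    · exact hbad (hfull w m)

lemma outP_antisymm {p : PrefList W} {o o' : Option W}
    (h1 : ¬ outPrefers p o o') (h2 : ¬ outPrefers p o' o)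
    (ho : ∀ x, o = some x → x ∈ p.val) (ho' : ∀ x, o' = some x → x ∈ p.val) : o = o' := by
  cases o with
  | none =>
    cases o' with
    | none => rfl
    | some y => exact absurd (ho' y rfl) h2
  | some x =>
    cases o' with
    | none => exact absurd (ho x rfl) h1
    | some y =>
      by_cases hxy : x = y
      · rw [hxy]
      · rcases prefers_total (ho x rfl) (ho' y rfl) hxy with h | h
        · exact absurd h h1
        · exact absurd h h2

lemma Matching.ext' {μ ν : Matching M W} (h : μ.toFun = ν.toFun) : μ = ν := by
  cases μ; cases ν; simpa using h

end Bridge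

end AGOSP
/-- If `|M| = |W|`, every woman's preference list is full, and the
women's profile `qbar` is acyclical, then the M-optimal stable matching rule is
OSP-implementable. -/
theorem mOptimal_OSPImplementable_of_acyclical
    {M W : Type} [Fintype M] [Fintype W] [DecidableEq M]
    (hcard : Fintype.card M = Fintype.card W)
    (qbar : W → PrefList M) (hfull : ∀ w : W, IsFull (qbar w))
    (hacyc : ¬ Cyclical qbar)
    (C : (M → PrefList W) → Matching M W)
    (hC : IsMOptimalStableRule qbar C) :
    OSPImplementable C := by
  letI : DecidableEq W := Classical.decEq W
  have hgood : AGOSP.GoodSigma (Finset.univ : Finset M) (Finset.univ : Finset W)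
      (fun _ => none) :=
    ⟨fun _ _ => rfl, fun _ w h => (by simp at h), fun _ _ _ h _ => (by simp at h)⟩
  refine ⟨AGOSP.mech qbar Finset.univ Finset.univ (fun _ => none), ?_, ?_⟩
  · intro m
    exact AGOSP.ospSpec hfull hacyc Finset.univ.card _ _ _ le_rfl hgood m Set.univ
  · intro pbar
    obtain ⟨hoff, hsub, hopt⟩ :=
      AGOSP.runSpec hfull hacyc Finset.univ.card _ _ _ le_rfl hgood pbar
    obtain ⟨hCstab, hCopt⟩ := hC pbar
    apply AGOSP.Matching.ext'
    funext m
    have hμstab : IsStable pbar qbar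
        ((AGOSP.mech qbar Finset.univ Finset.univ (fun _ => none)).run pbar) :=
      AGOSP.isStable_of_subStable hfull hsub
    have h1 := hCopt _ hμstab m
    have h2 := hopt (C pbar).toFun (AGOSP.isStable_to_subStable hfull hCstab) m
      (Finset.mem_univ m)
    rw [AGOSP.fP_univ (pbar m)] at h2
    refine AGOSP.outP_antisymm h1 h2 ?_ ?_
    · intro x hx
      exact (AGOSP.mem_fL.1 (hsub.1 m (Finset.mem_univ m) x hx)).1
    · intro x hx
      by_contra hxv
      exact hCstab (Or.inr ⟨m, x, hx, Or.inl hxv⟩)
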